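/- arXiv:1210.6296 — 10 statements merged into one kernel-verified Lean document; each statement's English description precedes it below -/
import Mathlib

section
/- Let 𝔫 be a finite-dimensional k-step nilpotent real Lie algebra with k ≥ 2 such that every closed 2-form ω on 𝔫 satisfies ω(x,y) = 0 for all x ∈ 𝔫^{k-1} and y ∈ 𝔫 (i.e. E_∞^{0,2}(𝔫) = 0). Then for every s ≥ 0 the product Lie algebra ℝ^s × 𝔫 (with ℝ^s abelian and componentwise bracket) admits no symplectic structure. -/
attribute [local instance 100] LieRing.ofAssociativeRing

/-- Componentwise Lie ring structure on a product. -/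
instance prodLieRing {L M : Type*} [LieRing L] [LieRing M] : LieRing (L × M) where
  bracket p q := (⁅p.1, q.1⁆, ⁅p.2, q.2⁆)
  add_lie p q r := by ext <;> simp [add_lie]
  lie_add p q r := by ext <;> simp [lie_add]
  lie_self p := by ext <;> simp
  leibniz_lie p q r := by
    ext
    · exact leibniz_lie p.1 q.1 r.1
    · exact leibniz_lie p.2 q.2 r.2

instance prodLieAlgebra {R : Type*} [CommRing R] {L M : Type*} [LieRing L] [LieRing M]
    [LieAlgebra R L] [LieAlgebra R M] : LieAlgebra R (L × M) where
  lie_smul t p q := by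
    ext
    · exact lie_smul t p.1 q.1
    · exact lie_smul t p.2 q.2

/-- A 2-form (alternating bilinear map) is closed if it satisfies the cocycle condition. -/
def IsClosed2Form {L : Type*} [LieRing L] [LieAlgebra ℝ L] (ω : L →ₗ[ℝ] L →ₗ[ℝ] ℝ) : Prop :=
  ∀ x y z : L, ω ⁅x, y⁆ z + ω ⁅y, z⁆ x + ω ⁅z, x⁆ y = 0

/-- A symplectic structure: an alternating, closed, nondegenerate bilinear form. -/
def IsSymplecticForm {L : Type*} [LieRing L] [LieAlgebra ℝ L] (ω : L →ₗ[ℝ] L →ₗ[ℝ] ℝ) : Prop :=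
  (∀ x : L, ω x x = 0) ∧ IsClosed2Form ω ∧ ∀ x : L, x ≠ 0 → ∃ y : L, ω x y ≠ 0

/-- If `𝔫` is `k`-step nilpotent (`k ≥ 2`) with `E_∞^{0,2}(𝔫) = 0`, then no trivial extension
`ℝ^s × 𝔫` admits a symplectic structure. -/
theorem no_symplectic_of_E02_eq_zero {L : Type*} [LieRing L] [LieAlgebra ℝ L]
    [FiniteDimensional ℝ L] (k : ℕ) (hk2 : 2 ≤ k)
    (hk : LieModule.lowerCentralSeries ℝ L L k = ⊥)
    (hk1 : LieModule.lowerCentralSeries ℝ L L (k - 1) ≠ ⊥)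
    (hE : ∀ ω : L →ₗ[ℝ] L →ₗ[ℝ] ℝ, (∀ x : L, ω x x = 0) → IsClosed2Form ω →
      ∀ x ∈ LieModule.lowerCentralSeries ℝ L L (k - 1), ∀ y : L, ω x y = 0) :
    ∀ s : ℕ, ¬ ∃ ω : ((Fin s → ℝ) × L) →ₗ[ℝ] ((Fin s → ℝ) × L) →ₗ[ℝ] ℝ,
      IsSymplecticForm ω := by
  intro s ⟨ω, halt, hclosed, hnd⟩
  -- bracket in the product
  have hbr : ∀ p q : (Fin s → ℝ) × L, ⁅p, q⁆ = ((⁅p.1, q.1⁆ : Fin s → ℝ), ⁅p.2, q.2⁆) :=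
    fun p q => rfl
  have hpi : ∀ a b : Fin s → ℝ, ⁅a, b⁆ = 0 := by
    intro a b; ext i
    simp [Ring.lie_def, mul_comm]
  have hbr0 : ∀ x y : L, ⁅((0 : Fin s → ℝ), x), ((0 : Fin s → ℝ), y)⁆
      = ((0 : Fin s → ℝ), ⁅x, y⁆) := by
    intro x y; rw [hbr]; simp [hpi]
  -- restriction of ω to L
  set inr : L →ₗ[ℝ] (Fin s → ℝ) × L := LinearMap.inr ℝ (Fin s → ℝ) L with hinr
  set ω' : L →ₗ[ℝ] L →ₗ[ℝ] ℝ := (ω.comp inr).compl₂ inr with hω'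
  have hω'app : ∀ x y : L, ω' x y = ω (0, x) (0, y) := fun x y => rfl
  have halt' : ∀ x : L, ω' x x = 0 := fun x => halt _
  have hclosed' : IsClosed2Form ω' := by
    intro x y z
    have := hclosed (0, x) (0, y) (0, z)
    rw [hbr0, hbr0, hbr0] at this
    simpa [hω'app] using this
  -- pick nonzero x in lcs^{k-1}
  obtain ⟨x, hxmem, hx0⟩ : ∃ x ∈ LieModule.lowerCentralSeries ℝ L L (k - 1), x ≠ 0 := by
    by_contra h
    push_neg at h
    exact hk1 ((LieSubmodule.eq_bot_iff _).mpr h)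
  -- ω((0,x), (a,0)) = 0 for brackets, hence for all of [L,L]
  have hbrkt : ∀ u v : L, ∀ a : Fin s → ℝ, ω (0, ⁅u, v⁆) (a, 0) = 0 := by
    intro u v a
    have h1 : ⁅((0 : Fin s → ℝ), v), ((a : Fin s → ℝ), (0 : L))⁆ = 0 := by
      rw [hbr]; simp [hpi]
    have h2 : ⁅((a : Fin s → ℝ), (0 : L)), ((0 : Fin s → ℝ), u)⁆ = 0 := by
      rw [hbr]; simp [hpi]
    have := hclosed (0, u) (0, v) (a, 0)
    rw [hbr0, h1, h2] at this
    simpa using this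
  have hcomm : x ∈ LieModule.lowerCentralSeries ℝ L L 1 := by
    have : LieModule.lowerCentralSeries ℝ L L (k - 1) ≤ LieModule.lowerCentralSeries ℝ L L 1 :=
      LieModule.antitone_lowerCentralSeries ℝ L L (by omega)
    exact this hxmem
  have hxvan : ∀ a : Fin s → ℝ, ω (0, x) (a, 0) = 0 := by
    intro a
    have hmem := hcomm
    rw [← LieSubmodule.mem_toSubmodule, LieModule.lowerCentralSeries_succ,
      LieSubmodule.lieIdeal_oper_eq_linear_span'] at hmem
    refine Submodule.span_induction ?_ ?_ ?_ ?_ hmem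
    · rintro m ⟨u, -, v, -, rfl⟩
      exact hbrkt u v a
    · show ω 0 (a, 0) = 0
      simp
    · intro p q _ _ hp hq
      have : ((0 : Fin s → ℝ), p + q) = ((0 : Fin s → ℝ), p) + ((0 : Fin s → ℝ), q) := by simp
      rw [this, map_add]; simp [hp, hq]
    · intro t p _ hp
      have : ((0 : Fin s → ℝ), t • p) = t • ((0 : Fin s → ℝ), p) := by simp
      rw [this, map_smul]; simp [hp]
  -- ω((0,x), (0,y)) = 0 by hE
  have hE' := hE ω' halt' hclosed' x hxmem
  -- contradiction with nondegeneracy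
  obtain ⟨q, hq⟩ := hnd (0, x) (by simp [hx0])
  apply hq
  have hsplit : q = ((q.1, 0) : (Fin s → ℝ) × L) + ((0 : Fin s → ℝ), q.2) := by simp
  rw [hsplit, map_add]
  have := hE' q.2
  rw [hω'app] at this
  rw [hxvan q.1, this, add_zero]
end

section
/- Let 𝔫 be a non-abelian finite-dimensional k-step nilpotent real Lie algebra and let s ≥ 0. Then every closed 2-form on 𝔫 vanishes whenever its first argument lies in 𝔫^{k-1} if and only if every closed 2-form ω̃ on the product Lie algebra ℝ^s × 𝔫 (with ℝ^s abelian) satisfies ω̃((0,x), v) = 0 for all x ∈ 𝔫^{k-1} and all v ∈ ℝ^s × 𝔫. (Note that {0} × 𝔫^{k-1} is the (k-1)st term of the lower central series of ℝ^s × 𝔫, so this says E_∞^{0,2}(ℝ^s ⊕ 𝔫) = 0 if and only if E_∞^{0,2}(𝔫) = 0.) -/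
attribute [local instance 100] LieRing.ofAssociativeRing

/-- If a linear functional vanishes on all brackets then it vanishes on `𝔫^1`. -/
lemma vanish_on_lcs_one {L : Type*} [LieRing L] [LieAlgebra ℝ L]
    (f : L →ₗ[ℝ] ℝ) (hf : ∀ u w : L, f ⁅u, w⁆ = 0) :
    ∀ x ∈ LieModule.lowerCentralSeries ℝ L L 1, f x = 0 := by
  intro x hx
  let N : LieSubmodule ℝ L L :=
    { LinearMap.ker f with
      lie_mem := fun {u m} _ => by simpa using hf u m }
  have hle : LieModule.lowerCentralSeries ℝ L L 1 ≤ N := by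
    rw [LieModule.lowerCentralSeries_succ]
    rw [LieSubmodule.lie_le_iff]
    intro u _ m _
    show ⁅u, m⁆ ∈ N
    exact (by simpa using hf u m : f ⁅u, m⁆ = 0)
  exact hle hx

/-- For a non-abelian `k`-step nilpotent `𝔫`: `E_∞^{0,2}(𝔫) = 0` iff
`E_∞^{0,2}(ℝ^s ⊕ 𝔫) = 0`. -/
theorem E02_eq_zero_iff_E02_prod_eq_zero {L : Type*} [LieRing L] [LieAlgebra ℝ L]
    [FiniteDimensional ℝ L] (hna : ∃ x y : L, ⁅x, y⁆ ≠ 0) (k : ℕ)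
    (hk : LieModule.lowerCentralSeries ℝ L L k = ⊥)
    (hk1 : LieModule.lowerCentralSeries ℝ L L (k - 1) ≠ ⊥) (s : ℕ) :
    (∀ ω : L →ₗ[ℝ] L →ₗ[ℝ] ℝ, (∀ x : L, ω x x = 0) → IsClosed2Form ω →
        ∀ x ∈ LieModule.lowerCentralSeries ℝ L L (k - 1), ∀ y : L, ω x y = 0) ↔
    (∀ ω' : ((Fin s → ℝ) × L) →ₗ[ℝ] ((Fin s → ℝ) × L) →ₗ[ℝ] ℝ,
        (∀ v : (Fin s → ℝ) × L, ω' v v = 0) → IsClosed2Form ω' →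
        ∀ x ∈ LieModule.lowerCentralSeries ℝ L L (k - 1), ∀ v : (Fin s → ℝ) × L,
          ω' ((0 : Fin s → ℝ), x) v = 0) := by
  -- k ≥ 2, so k - 1 ≥ 1 and 𝔫^{k-1} ≤ 𝔫^1
  have hk2 : 2 ≤ k := by
    by_contra h
    push_neg at h
    obtain ⟨x, y, hxy⟩ := hna
    have h1 : LieModule.lowerCentralSeries ℝ L L 1 = ⊥ := by
      interval_cases k
      · exact le_bot_iff.mp (hk ▸ LieModule.antitone_lowerCentralSeries ℝ L L (Nat.zero_le 1))
      · exact hk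
    have : ⁅x, y⁆ ∈ LieModule.lowerCentralSeries ℝ L L 1 := by
      rw [LieModule.lowerCentralSeries_succ]
      exact LieSubmodule.lie_mem_lie (LieSubmodule.mem_top x) (LieSubmodule.mem_top y)
    rw [h1] at this
    exact hxy (by simpa using this)
  have hle1 : LieModule.lowerCentralSeries ℝ L L (k - 1) ≤
      LieModule.lowerCentralSeries ℝ L L 1 :=
    LieModule.antitone_lowerCentralSeries ℝ L L (by omega)
  constructor
  · -- forward: restrict ω' along x ↦ (0, x)
    intro H ω' halt hcl x hx v
    -- the inclusion L →ₗ (Fin s → ℝ) × L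
    let ι : L →ₗ[ℝ] (Fin s → ℝ) × L := LinearMap.prod 0 LinearMap.id
    have hι : ∀ x : L, ι x = ((0 : Fin s → ℝ), x) := fun _ => rfl
    have hbr : ∀ x y : L, (⁅((0 : Fin s → ℝ), x), ((0 : Fin s → ℝ), y)⁆ :
        (Fin s → ℝ) × L) = ((0 : Fin s → ℝ), ⁅x, y⁆) := by
      intro x y
      show ((⁅(0 : Fin s → ℝ), (0 : Fin s → ℝ)⁆), ⁅x, y⁆) = _
      simp
    -- restricted form
    let ω : L →ₗ[ℝ] L →ₗ[ℝ] ℝ := (ω'.comp ι).compl₂ ι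
    have hωdef : ∀ a b : L, ω a b = ω' ((0 : Fin s → ℝ), a) ((0 : Fin s → ℝ), b) :=
      fun _ _ => rfl
    have hωalt : ∀ a : L, ω a a = 0 := fun a => halt _
    have hωcl : IsClosed2Form ω := by
      intro a b c
      have := hcl ((0 : Fin s → ℝ), a) ((0 : Fin s → ℝ), b) ((0 : Fin s → ℝ), c)
      rw [hbr a b, hbr b c, hbr c a] at this
      simpa [hωdef] using this
    have hω0 : ∀ x ∈ LieModule.lowerCentralSeries ℝ L L (k - 1), ∀ y : L, ω x y = 0 :=
      H ω hωalt hωcl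
    -- second part: ω'((0,x),(a,0)) = 0 for x in 𝔫^1, via the cocycle identity
    have haux : ∀ a : Fin s → ℝ, ω' ((0 : Fin s → ℝ), x) ((a, (0 : L))) = 0 := by
      intro a
      have key : ∀ u w : L, ω' ((0 : Fin s → ℝ), ⁅u, w⁆) ((a, (0 : L))) = 0 := by
        intro u w
        have h1 : (⁅((0 : Fin s → ℝ), w), (a, (0 : L))⁆ : (Fin s → ℝ) × L) = 0 := by
          show ((⁅(0 : Fin s → ℝ), a⁆), ⁅w, (0 : L)⁆) = 0
          ext <;> simp [Ring.lie_def]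
        have h2 : (⁅((a, (0 : L)) : (Fin s → ℝ) × L), ((0 : Fin s → ℝ), u)⁆) = 0 := by
          show ((⁅a, (0 : Fin s → ℝ)⁆), ⁅(0 : L), u⁆) = 0
          ext <;> simp [Ring.lie_def]
        have := hcl ((0 : Fin s → ℝ), u) ((0 : Fin s → ℝ), w) ((a, (0 : L)))
        rw [hbr u w, h1, h2] at this
        simpa using this
      -- linear functional x ↦ ω'((0,x),(a,0)) vanishes on brackets
      let f : L →ₗ[ℝ] ℝ := ((ω'.comp ι).flip ((a, (0 : L)) : (Fin s → ℝ) × L))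
      have hf : ∀ u w : L, f ⁅u, w⁆ = 0 := fun u w => key u w
      exact vanish_on_lcs_one f hf x (hle1 hx)
    -- combine: v = (v.1, 0) + (0, v.2)
    have hv : v = ((v.1, (0 : L)) : (Fin s → ℝ) × L) + (((0 : Fin s → ℝ), v.2)) := by
      ext <;> simp
    have h2 : ω' ((0 : Fin s → ℝ), x) ((0 : Fin s → ℝ), v.2) = 0 :=
      (hωdef x v.2) ▸ hω0 x hx v.2
    rw [hv, map_add, haux v.1, h2]
    ring
  · -- backward: pull back ω along projection
    intro H ω halt hcl x hx y
    let π : (Fin s → ℝ) × L →ₗ[ℝ] L := LinearMap.snd ℝ _ _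
    let ω' : ((Fin s → ℝ) × L) →ₗ[ℝ] ((Fin s → ℝ) × L) →ₗ[ℝ] ℝ := (ω.comp π).compl₂ π
    have hω'def : ∀ p q : (Fin s → ℝ) × L, ω' p q = ω p.2 q.2 := fun _ _ => rfl
    have h1 : ∀ v : (Fin s → ℝ) × L, ω' v v = 0 := fun v => halt v.2
    have h2 : IsClosed2Form ω' := by
      intro p q r
      exact hcl p.2 q.2 r.2
    have := H ω' h1 h2 x hx ((0 : Fin s → ℝ), y)
    simpa [hω'def] using this
end

section
/- Let 𝔫 be a nonzero finite-dimensional k-step nilpotent real Lie algebra and let ω be a symplectic structure on 𝔫. On 𝔫̃ = 𝔫 × ℝ define the bracket [(x,a),(y,b)] = ([x,y], ω(x,y)). Then: (1) this bracket makes 𝔫̃ a real Lie algebra (the Jacobi identity holds because ω is closed); (2) the lower central series of 𝔫̃ satisfies 𝔫̃^i = 𝔫^i × ℝ for 1 ≤ i ≤ k, so in particular 𝔫̃^k = {0} × ℝ and 𝔫̃^{k+1} = 0, i.e. 𝔫̃ is (k+1)-step nilpotent; and (3) the center of 𝔫̃ equals {0} × ℝ. -/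
/-- The bracket of the central extension `𝔫̃ = 𝔫 × ℝ` of `𝔫` by the cocycle `ω`. -/
def extBracket {L : Type*} [LieRing L] [LieAlgebra ℝ L] (ω : L →ₗ[ℝ] L →ₗ[ℝ] ℝ)
    (p q : L × ℝ) : L × ℝ :=
  (⁅p.1, q.1⁆, ω p.1 q.1)

/-- The lower central series of the central extension, defined directly from its bracket. -/
def extLCS {L : Type*} [LieRing L] [LieAlgebra ℝ L] (ω : L →ₗ[ℝ] L →ₗ[ℝ] ℝ) :
    ℕ → Submodule ℝ (L × ℝ)
  | 0 => ⊤
  | (i + 1) => Submodule.span ℝ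
      {z : L × ℝ | ∃ p q : L × ℝ, q ∈ extLCS ω i ∧ z = extBracket ω p q}

/-- The central extension of a `k`-step nilpotent symplectic Lie algebra by its symplectic form
is a `(k+1)`-step nilpotent Lie algebra whose lower central series terms are `𝔫^i × ℝ`
(`1 ≤ i ≤ k`) and whose center is `{0} × ℝ`. -/
theorem central_extension_structure {L : Type*} [LieRing L] [LieAlgebra ℝ L]
    [FiniteDimensional ℝ L] [Nontrivial L] (k : ℕ)
    (hk : LieModule.lowerCentralSeries ℝ L L k = ⊥)
    (hk1 : LieModule.lowerCentralSeries ℝ L L (k - 1) ≠ ⊥)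
    (ω : L →ₗ[ℝ] L →ₗ[ℝ] ℝ) (hω : IsSymplecticForm ω) :
    -- (1) the bracket makes 𝔫̃ = 𝔫 × ℝ a real Lie algebra
    ((∀ p q r : L × ℝ, extBracket ω (p + q) r = extBracket ω p r + extBracket ω q r) ∧
     (∀ p q r : L × ℝ, extBracket ω p (q + r) = extBracket ω p q + extBracket ω p r) ∧
     (∀ (t : ℝ) (p q : L × ℝ), extBracket ω (t • p) q = t • extBracket ω p q) ∧
     (∀ (t : ℝ) (p q : L × ℝ), extBracket ω p (t • q) = t • extBracket ω p q) ∧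
     (∀ p : L × ℝ, extBracket ω p p = 0) ∧
     (∀ p q r : L × ℝ, extBracket ω p (extBracket ω q r) =
        extBracket ω (extBracket ω p q) r + extBracket ω q (extBracket ω p r))) ∧
    -- (2) the lower central series of 𝔫̃ is 𝔫^i × ℝ for 1 ≤ i ≤ k, and 𝔫̃ is
    -- (k+1)-step nilpotent
    ((∀ i : ℕ, 1 ≤ i → i ≤ k → extLCS ω i =
        (LieModule.lowerCentralSeries ℝ L L i : Submodule ℝ L).prod ⊤) ∧
     extLCS ω k = (⊥ : Submodule ℝ L).prod ⊤ ∧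
     extLCS ω (k + 1) = ⊥) ∧
    -- (3) the center of 𝔫̃ is {0} × ℝ
    ({p : L × ℝ | ∀ q : L × ℝ, extBracket ω p q = 0} = {p : L × ℝ | p.1 = 0}) := by
  obtain ⟨halt, hclosed, hnd⟩ := hω
  have hskew : ∀ x y : L, ω x y = -ω y x := by
    intro x y
    have h := halt (x + y)
    simp only [map_add, LinearMap.add_apply, halt x, halt y] at h
    linarith
  -- k ≥ 1
  have hk0 : k ≠ 0 := by
    rintro rfl
    simp only [Nat.zero_sub] at hk1; exact hk1 hk
  have hkge : 1 ≤ k := Nat.one_le_iff_ne_zero.mpr hk0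
  -- a nonzero central element z and y with ω z y ≠ 0
  obtain ⟨z, hzmem, hzne⟩ : ∃ z, z ∈ LieModule.lowerCentralSeries ℝ L L (k - 1) ∧ z ≠ 0 := by
    by_contra h
    push_neg at h
    exact hk1 ((LieSubmodule.eq_bot_iff _).mpr h)
  obtain ⟨y, hy⟩ := hnd z hzne
  have hzcentral : ∀ x : L, ⁅x, z⁆ = 0 := by
    intro x
    have : ⁅x, z⁆ ∈ LieModule.lowerCentralSeries ℝ L L k := by
      have : ⁅x, z⁆ ∈ ⁅(⊤ : LieIdeal ℝ L), LieModule.lowerCentralSeries ℝ L L (k - 1)⁆ :=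
        LieSubmodule.lie_mem_lie (LieSubmodule.mem_top x) hzmem
      rwa [← LieModule.lowerCentralSeries_succ, Nat.sub_add_cancel hkge] at this
    rw [hk] at this
    exact this
  -- main induction
  have main : ∀ i : ℕ, i ≤ k → extLCS ω i =
      (LieModule.lowerCentralSeries ℝ L L i : Submodule ℝ L).prod ⊤ := by
    intro i
    induction i with
    | zero =>
      intro _
      simp [extLCS, LieModule.lowerCentralSeries_zero]
    | succ i ih =>
      intro hik
      have hik' : i ≤ k := Nat.le_of_succ_le hik
      have IH := ih hik'
      have hzi : z ∈ LieModule.lowerCentralSeries ℝ L L i :=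
        LieModule.antitone_lowerCentralSeries ℝ L L (Nat.le_sub_one_of_lt hik) hzmem
      apply le_antisymm
      · rw [extLCS, Submodule.span_le]
        rintro _ ⟨p, q, hq, rfl⟩
        rw [IH] at hq
        refine ⟨?_, trivial⟩
        have : ⁅p.1, q.1⁆ ∈ ⁅(⊤ : LieIdeal ℝ L), LieModule.lowerCentralSeries ℝ L L i⁆ :=
          LieSubmodule.lie_mem_lie (LieSubmodule.mem_top p.1) hq.1
        rwa [← LieModule.lowerCentralSeries_succ] at this
      · -- (0, r) is in the span
        have hzero : ∀ r : ℝ, ((0 : L), r) ∈ extLCS ω (i + 1) := by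
          have hc : ((0 : L), ω y z) ∈ extLCS ω (i + 1) := by
            rw [extLCS]
            apply Submodule.subset_span
            refine ⟨(y, 0), (z, 0), ?_, ?_⟩
            · rw [IH]; exact ⟨hzi, trivial⟩
            · simp [extBracket, hzcentral y]
          intro r
          have hyz : ω y z ≠ 0 := by rw [hskew y z]; simpa using hy
          have := Submodule.smul_mem (extLCS ω (i + 1)) (r / ω y z) hc
          simpa [Prod.smul_mk, smul_eq_mul, div_mul_cancel₀ r hyz] using this
        have hfirst : ∀ x ∈ LieModule.lowerCentralSeries ℝ L L (i + 1),
            ((x : L), (0 : ℝ)) ∈ extLCS ω (i + 1) := by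
          intro x hx
          rw [LieModule.lowerCentralSeries_succ] at hx
          rw [← LieSubmodule.mem_toSubmodule, LieSubmodule.lieIdeal_oper_eq_linear_span'] at hx
          induction hx using Submodule.span_induction with
          | mem w hw =>
            obtain ⟨a, -, n, hn, rfl⟩ := hw
            have h1 : (⁅a, n⁆, ω a n) ∈ extLCS ω (i + 1) := by
              rw [extLCS]
              apply Submodule.subset_span
              exact ⟨(a, 0), (n, 0), by rw [IH]; exact ⟨hn, trivial⟩, rfl⟩
            have h2 := Submodule.add_mem _ h1 (hzero (-(ω a n)))
            simpa using h2
          | zero => exact (extLCS ω (i + 1)).zero_mem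
          | add a b _ _ ha hb =>
            have := Submodule.add_mem _ ha hb
            simpa using this
          | smul t a _ ha =>
            have := Submodule.smul_mem _ t ha
            simpa [Prod.smul_mk] using this
        rintro ⟨x, r⟩ ⟨hx, -⟩
        have := Submodule.add_mem _ (hfirst x hx) (hzero r)
        simpa using this
  refine ⟨⟨?_, ?_, ?_, ?_, ?_, ?_⟩, ⟨?_, ?_, ?_⟩, ?_⟩
  · intro p q r; simp [extBracket, Prod.ext_iff, add_lie]
  · intro p q r; simp [extBracket, Prod.ext_iff, lie_add]
  · intro t p q; simp [extBracket, Prod.ext_iff, smul_lie]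
  · intro t p q; simp [extBracket, Prod.ext_iff, lie_smul]
  · intro p; simp [extBracket, Prod.ext_iff, halt]
  · intro p q r
    simp only [extBracket, Prod.mk_add_mk, Prod.ext_iff]
    constructor
    · exact leibniz_lie p.1 q.1 r.1
    · have h := hclosed p.1 q.1 r.1
      have h1 : ω ⁅q.1, r.1⁆ p.1 = -ω p.1 ⁅q.1, r.1⁆ := by rw [hskew]
      have h2 : ω ⁅r.1, p.1⁆ q.1 = ω q.1 ⁅p.1, r.1⁆ := by
        rw [hskew ⁅r.1, p.1⁆ q.1, ← lie_skew r.1 p.1, map_neg, neg_neg]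
      rw [h1, h2] at h
      linarith
  · intro i hi1 hik; exact main i hik
  · have := main k le_rfl
    rw [hk] at this
    simpa using this
  · have hkeq := main k le_rfl
    rw [hk] at hkeq
    rw [extLCS, Submodule.span_eq_bot]
    rintro _ ⟨p, q, hq, rfl⟩
    rw [hkeq] at hq
    have hq1 : q.1 = 0 := by simpa using hq.1
    simp [extBracket, hq1]
  · ext p
    simp only [Set.mem_setOf_eq]
    constructor
    · intro h
      by_contra hp
      obtain ⟨w, hw⟩ := hnd p.1 hp
      have := h (w, 0)
      rw [extBracket, Prod.ext_iff] at this
      exact hw this.2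
    · intro hp q
      simp [extBracket, hp, Prod.ext_iff]
end

section
/- Let n ≥ 3 and let 𝔱 be the real Lie algebra of strictly upper triangular (n+1)×(n+1) real matrices (the nilradical of the Borel subalgebra of sl(n+1,ℝ)). Then 𝔱 is n-step nilpotent and E_∞^{0,2}(𝔱) = 0: every closed 2-form ω on 𝔱 satisfies ω(x,y) = 0 for every x in 𝔱^{n-1} (the one-dimensional space of matrices whose only possibly nonzero entry is in position (1, n+1)) and every y ∈ 𝔱. -/
lemma strict_mul_zero {n : ℕ} (A B : Matrix (Fin n) (Fin n) ℝ)
    (hA : ∀ i j : Fin n, j ≤ i → A i j = 0) (hB : ∀ i j : Fin n, j ≤ i → B i j = 0)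
    {i j : Fin n} (h : j ≤ i) : (A * B) i j = 0 := by
  rw [Matrix.mul_apply]
  refine Finset.sum_eq_zero fun l _ => ?_
  by_cases hl : l ≤ i
  · rw [hA i l hl, zero_mul]
  · have : j ≤ l := le_trans h (le_of_not_ge hl)
    rw [hB l j this, mul_zero]

attribute [local instance 100] LieRing.ofAssociativeRing

/-- The Lie algebra of strictly upper triangular `n × n` real matrices. -/
def strictUpper (n : ℕ) : LieSubalgebra ℝ (Matrix (Fin n) (Fin n) ℝ) where
  carrier := {X | ∀ i j : Fin n, j ≤ i → X i j = 0}
  add_mem' := fun {X Y} hX hY i j h => by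
    simp [Matrix.add_apply, hX i j h, hY i j h]
  zero_mem' := fun i j _ => rfl
  smul_mem' := fun t {X} hX i j h => by
    simp [Matrix.smul_apply, hX i j h]
  lie_mem' := fun {X Y} hX hY i j h => by
    rw [Ring.lie_def, Matrix.sub_apply, strict_mul_zero X Y hX hY h,
      strict_mul_zero Y X hY hX h, sub_zero]

set_option synthInstance.maxHeartbeats 1000000

open Matrix in
/-- basis element of `strictUpper N` -/
def EU {N : ℕ} (i j : Fin N) (hij : i < j) : strictUpper N :=
  ⟨single i j 1, fun p q hq => by
    apply Matrix.single_apply_of_ne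
    rintro ⟨rfl, rfl⟩
    exact absurd hij (not_lt.2 hq)⟩

open Matrix in
lemma EU_val {N : ℕ} (i j : Fin N) (hij : i < j) :
    (EU i j hij : Matrix (Fin N) (Fin N) ℝ) = single i j 1 := rfl

lemma EU_bracket_chain {N : ℕ} (i j l : Fin N) (hij : i < j) (hjl : j < l) :
    ⁅EU i j hij, EU j l hjl⁆ = EU i l (hij.trans hjl) := by
  apply Subtype.ext
  rw [LieSubalgebra.coe_bracket, EU_val, EU_val, EU_val, Ring.lie_def,
    Matrix.single_mul_single_same,
    Matrix.single_mul_single_of_ne (h := (hij.trans hjl).ne'), one_mul, sub_zero]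

lemma EU_bracket_ne {N : ℕ} (i j k l : Fin N) (hij : i < j) (hkl : k < l)
    (h1 : j ≠ k) (h2 : l ≠ i) :
    ⁅EU i j hij, EU k l hkl⁆ = 0 := by
  apply Subtype.ext
  rw [LieSubalgebra.coe_bracket, EU_val, EU_val, Ring.lie_def,
    Matrix.single_mul_single_of_ne (h := h1), Matrix.single_mul_single_of_ne (h := h2), sub_zero,
    ZeroMemClass.coe_zero]

lemma EU_bracket_rev {N : ℕ} (i j k : Fin N) (hij : i < j) (hki : k < i) :
    ⁅EU i j hij, EU k i hki⁆ = -(EU k j (hki.trans hij)) := by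
  apply Subtype.ext
  rw [LieSubalgebra.coe_bracket, EU_val, EU_val, Ring.lie_def,
    Matrix.single_mul_single_of_ne (h := (hki.trans hij).ne'),
    Matrix.single_mul_single_same, one_mul, zero_sub]
  rfl

lemma mul_level {N a b : ℕ} (A B : Matrix (Fin N) (Fin N) ℝ)
    (hA : ∀ i j : Fin N, (j : ℕ) < i + a + 1 → A i j = 0)
    (hB : ∀ i j : Fin N, (j : ℕ) < i + b + 1 → B i j = 0)
    (i j : Fin N) (h : (j : ℕ) < i + a + b + 2) : (A * B) i j = 0 := by
  rw [Matrix.mul_apply]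
  refine Finset.sum_eq_zero fun l _ => ?_
  by_cases hl : (l : ℕ) < i + a + 1
  · rw [hA i l hl, zero_mul]
  · rw [hB l j (by omega), mul_zero]

/-- Level-0 form of membership in `strictUpper`. -/
lemma level_zero {N : ℕ} (y : strictUpper N) :
    ∀ i j : Fin N, (j : ℕ) < i + 0 + 1 → (y : Matrix (Fin N) (Fin N) ℝ) i j = 0 := by
  intro i j h
  exact y.2 i j (Fin.le_def.mpr (by omega))

/-- The filtration of `strictUpper N` by super-diagonal level. -/
def TF (N k : ℕ) : LieSubmodule ℝ (strictUpper N) (strictUpper N) where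
  carrier := {x | ∀ i j : Fin N, (j : ℕ) < i + k + 1 → (x : Matrix (Fin N) (Fin N) ℝ) i j = 0}
  add_mem' := fun {X Y} hX hY i j h => by
    simp [Matrix.add_apply, hX i j h, hY i j h]
  zero_mem' := fun i j _ => rfl
  smul_mem' := fun t {X} hX i j h => by
    show (t • (X : Matrix (Fin N) (Fin N) ℝ)) i j = 0
    simp [Matrix.smul_apply, hX i j h]
  lie_mem := fun {y x} hx i j h => by
    show (⁅(y : Matrix (Fin N) (Fin N) ℝ), (x : Matrix (Fin N) (Fin N) ℝ)⁆) i j = 0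
    rw [Ring.lie_def, Matrix.sub_apply,
      mul_level (a := 0) (b := k) _ _ (level_zero y) hx i j (by omega),
      mul_level (a := k) (b := 0) _ _ hx (level_zero y) i j (by omega), sub_zero]

lemma mem_TF {N k : ℕ} {x : strictUpper N} :
    x ∈ TF N k ↔ ∀ i j : Fin N, (j : ℕ) < i + k + 1 →
      (x : Matrix (Fin N) (Fin N) ℝ) i j = 0 := Iff.rfl

lemma lcs_le_TF (N : ℕ) :
    ∀ k, LieModule.lowerCentralSeries ℝ (strictUpper N) (strictUpper N) k ≤ TF N k := by
  intro k
  induction k with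
  | zero => exact fun x _ => level_zero x
  | succ k ih =>
    rw [LieModule.lowerCentralSeries_succ]
    refine le_trans (LieSubmodule.mono_lie_right _ ih) ?_
    rw [LieSubmodule.lie_le_iff]
    intro y _ m hm
    intro i j h
    show (⁅(y : Matrix (Fin N) (Fin N) ℝ), (m : Matrix (Fin N) (Fin N) ℝ)⁆) i j = 0
    rw [Ring.lie_def, Matrix.sub_apply,
      mul_level (a := 0) (b := k) _ _ (level_zero y) hm i j (by omega),
      mul_level (a := k) (b := 0) _ _ hm (level_zero y) i j (by omega), sub_zero]

lemma EU_mem_lcs (n : ℕ) : ∀ k, ∀ hk : k + 1 ≤ n,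
    EU (0 : Fin (n + 1)) ⟨k + 1, by omega⟩ (by simp [Fin.lt_def]) ∈
      LieModule.lowerCentralSeries ℝ (strictUpper (n + 1)) (strictUpper (n + 1)) k := by
  intro k
  induction k with
  | zero => intro _; exact LieSubmodule.mem_top _
  | succ k ih =>
    intro hk
    have hk' : k + 1 ≤ n := by omega
    rw [LieModule.lowerCentralSeries_succ]
    have hb := LieSubmodule.lie_mem_lie (I := (⊤ : LieIdeal ℝ (strictUpper (n + 1))))
      (LieSubmodule.mem_top (EU (⟨k + 1, by omega⟩ : Fin (n + 1)) ⟨k + 2, by omega⟩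
        (by simp [Fin.lt_def]))) (ih hk')
    rw [EU_bracket_rev (⟨k + 1, by omega⟩ : Fin (n + 1)) ⟨k + 2, by omega⟩ 0
      (by simp [Fin.lt_def]) (by simp [Fin.lt_def])] at hb
    have := neg_mem hb
    rwa [neg_neg] at this

set_option synthInstance.maxHeartbeats 1000000
set_option maxHeartbeats 4000000

/-- For `n ≥ 3`, the nilradical `𝔱` of the Borel subalgebra of `sl(n+1, ℝ)` (strictly upper
triangular `(n+1) × (n+1)` matrices) is `n`-step nilpotent and satisfies
`E_∞^{0,2}(𝔱) = 0`. -/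
theorem strictUpper_E02_eq_zero (n : ℕ) (hn : 3 ≤ n) :
    (LieModule.lowerCentralSeries ℝ (strictUpper (n + 1)) (strictUpper (n + 1)) n = ⊥ ∧
     LieModule.lowerCentralSeries ℝ (strictUpper (n + 1)) (strictUpper (n + 1)) (n - 1) ≠ ⊥) ∧
    ∀ ω : (strictUpper (n + 1)) →ₗ[ℝ] (strictUpper (n + 1)) →ₗ[ℝ] ℝ,
      (∀ x : strictUpper (n + 1), ω x x = 0) → IsClosed2Form ω →
      ∀ x ∈ LieModule.lowerCentralSeries ℝ (strictUpper (n + 1)) (strictUpper (n + 1)) (n - 1),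
        ∀ y : strictUpper (n + 1), ω x y = 0 := by
  have h0last : (0 : Fin (n + 1)) < Fin.last n := by
    rw [Fin.lt_def]; show 0 < n; omega
  refine ⟨⟨?_, ?_⟩, ?_⟩
  · rw [eq_bot_iff]
    intro x hx
    have hx' := lcs_le_TF (n + 1) n hx
    rw [LieSubmodule.mem_bot]
    apply Subtype.ext
    ext i j
    rw [hx' i j (by have := j.isLt; omega)]
    simp
  · intro hbot
    have hm := EU_mem_lcs n (n - 1) (by omega)
    rw [hbot, LieSubmodule.mem_bot] at hm
    have h1 := congrArg
      (fun z : strictUpper (n + 1) =>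
        (z : Matrix (Fin (n + 1)) (Fin (n + 1)) ℝ) 0 ⟨n - 1 + 1, by omega⟩) hm
    simp only [EU_val, Matrix.single_apply_same, ZeroMemClass.coe_zero,
      Matrix.zero_apply] at h1
    exact one_ne_zero h1
  · intro ω halt hclosed x hx y
    set E0n := EU (0 : Fin (n + 1)) (Fin.last n) h0last with hE0ndef
    have hskew : ∀ u v : strictUpper (n + 1), ω u v = -(ω v u) := by
      intro u v
      have h := halt (u + v)
      rw [map_add] at h
      simp only [LinearMap.add_apply, map_add, halt u, halt v] at h
      linarith
    have hz1 : ∀ v : strictUpper (n + 1), ω 0 v = 0 := by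
      intro v; rw [map_zero]; simp
    have key : ∀ (a b : Fin (n + 1)) (hab : a < b), ω E0n (EU a b hab) = 0 := by
      intro a b hab
      have habv : (a : ℕ) < b := Fin.lt_def.mp hab
      have hbv : (b : ℕ) ≤ n := Nat.lt_succ_iff.mp b.isLt
      have co : ∀ (k : Fin (n + 1)) (h0k : (0 : Fin (n + 1)) < k) (hkl : k < Fin.last n),
          ω E0n (EU a b hab) + ω ⁅EU k (Fin.last n) hkl, EU a b hab⁆ (EU 0 k h0k)
            + ω ⁅EU a b hab, EU 0 k h0k⁆ (EU k (Fin.last n) hkl) = 0 := by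
        intro k h0k hkl
        have h := hclosed (EU 0 k h0k) (EU k (Fin.last n) hkl) (EU a b hab)
        rwa [EU_bracket_chain] at h
      by_cases hex : ∃ kv : ℕ, 0 < kv ∧ kv < n ∧ kv ≠ (a : ℕ) ∧ kv ≠ (b : ℕ)
      · obtain ⟨kv, hk1, hk2, hk3, hk4⟩ := hex
        have h0k : (0 : Fin (n + 1)) < (⟨kv, by omega⟩ : Fin (n + 1)) := by
          rw [Fin.lt_def]; show 0 < kv; omega
        have hkl : (⟨kv, by omega⟩ : Fin (n + 1)) < Fin.last n := by
          rw [Fin.lt_def]; show kv < n; omega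
        have h := co ⟨kv, by omega⟩ h0k hkl
        have e1 : ⁅EU (⟨kv, by omega⟩ : Fin (n + 1)) (Fin.last n) hkl, EU a b hab⁆ = 0 :=
          EU_bracket_ne _ _ _ _ _ _
            (Fin.ne_of_val_ne (show n ≠ (a : ℕ) by omega))
            (Fin.ne_of_val_ne (show (b : ℕ) ≠ kv by omega))
        have e2 : ⁅EU a b hab, EU (0 : Fin (n + 1)) ⟨kv, by omega⟩ h0k⁆ = 0 :=
          EU_bracket_ne _ _ _ _ _ _
            (Fin.ne_of_val_ne (show (b : ℕ) ≠ 0 by omega))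
            (Fin.ne_of_val_ne (show kv ≠ (a : ℕ) by omega))
        rw [e1, e2, hz1, hz1] at h
        linarith
      · push_neg at hex
        have ha1 : (a : ℕ) = 1 ∧ (b : ℕ) = 2 := by
          by_cases ha : (a : ℕ) = 1
          · by_cases hb : (b : ℕ) = 2
            · exact ⟨ha, hb⟩
            · have := hex 2 (by omega) (by omega) (by omega)
              omega
          · have h1 := hex 1 (by omega) (by omega) (by omega)
            have h2 := hex 2 (by omega) (by omega) (by omega)
            omega
        have h0a : (0 : Fin (n + 1)) < a := by rw [Fin.lt_def]; show 0 < (a : ℕ); omega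
        have hblast : b < Fin.last n := by rw [Fin.lt_def]; show (b : ℕ) < n; omega
        have halast : a < Fin.last n := hab.trans hblast
        have h0b : (0 : Fin (n + 1)) < b := h0a.trans hab
        -- identity with k = b
        have hI1 := co b h0b hblast
        have e1 : ⁅EU b (Fin.last n) hblast, EU a b hab⁆ = -(EU a (Fin.last n) (hab.trans hblast)) :=
          EU_bracket_rev _ _ _ _ _
        have e2 : ⁅EU a b hab, EU 0 b h0b⁆ = 0 :=
          EU_bracket_ne _ _ _ _ _ _
            (Fin.ne_of_val_ne (show (b : ℕ) ≠ 0 by omega))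
            (Fin.ne_of_val_ne (show (b : ℕ) ≠ (a : ℕ) by omega))
        rw [e1, e2, hz1, map_neg, LinearMap.neg_apply] at hI1
        -- identity with k = a
        have hI2 := co a h0a (hab.trans hblast)
        have e3 : ⁅EU a (Fin.last n) (hab.trans hblast), EU a b hab⁆ = 0 :=
          EU_bracket_ne _ _ _ _ _ _
            (Fin.ne_of_val_ne (show (n : ℕ) ≠ (a : ℕ) by omega))
            (Fin.ne_of_val_ne (show (b : ℕ) ≠ (a : ℕ) by omega))
        have e4 : ⁅EU a b hab, EU 0 a h0a⁆ = -(EU 0 b h0b) :=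
          EU_bracket_rev _ _ _ _ _
        rw [e3, e4, hz1, map_neg, LinearMap.neg_apply] at hI2
        have hs := hskew (EU 0 b h0b) (EU a (Fin.last n) (hab.trans hblast))
        linarith
    -- x is a multiple of E0n
    have hxT := lcs_le_TF (n + 1) (n - 1) hx
    set c := (x : Matrix (Fin (n + 1)) (Fin (n + 1)) ℝ) 0 (Fin.last n) with hc
    have hxc : x = c • E0n := by
      apply Subtype.ext
      show (x : Matrix (Fin (n + 1)) (Fin (n + 1)) ℝ) = c • (E0n : Matrix (Fin (n + 1)) (Fin (n + 1)) ℝ)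
      ext p q
      rw [Matrix.smul_apply, EU_val]
      by_cases hpq : p = 0 ∧ q = Fin.last n
      · obtain ⟨rfl, rfl⟩ := hpq
        rw [Matrix.single_apply_same]
        simp [hc]
      · have hne : ¬((0 : Fin (n + 1)) = p ∧ Fin.last n = q) := by
          rintro ⟨rfl, rfl⟩; exact hpq ⟨rfl, rfl⟩
        rw [Matrix.single_apply_of_ne (h := hne)]
        have hq : (q : ℕ) < (p : ℕ) + (n - 1) + 1 := by
          rcases Nat.lt_or_ge (q : ℕ) n with h | h
          · omega
          · have hql : q = Fin.last n := Fin.ext (by have := q.isLt; show (q:ℕ) = n; omega)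
            have hp : (p : ℕ) ≠ 0 := by
              intro h0
              exact hpq ⟨Fin.ext h0, hql⟩
            omega
        rw [hxT p q hq]
        simp
    rw [hxc, map_smul, LinearMap.smul_apply, smul_eq_mul]
    suffices h : ω E0n y = 0 by rw [h, mul_zero]
    classical
    have hy : y = ∑ i : Fin (n + 1), ∑ j : Fin (n + 1),
        (y : Matrix (Fin (n + 1)) (Fin (n + 1)) ℝ) i j •
          (if h : i < j then EU i j h else 0) := by
      apply Subtype.ext
      rw [AddSubmonoidClass.coe_finset_sum]
      conv_lhs => rw [Matrix.matrix_eq_sum_single (y : Matrix (Fin (n + 1)) (Fin (n + 1)) ℝ)]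
      refine Finset.sum_congr rfl fun i _ => ?_
      rw [AddSubmonoidClass.coe_finset_sum]
      refine Finset.sum_congr rfl fun j _ => ?_
      by_cases hij : i < j
      · rw [dif_pos hij]
        show Matrix.single i j ((y : Matrix (Fin (n + 1)) (Fin (n + 1)) ℝ) i j) =
          (y : Matrix (Fin (n + 1)) (Fin (n + 1)) ℝ) i j • Matrix.single i j (1 : ℝ)
        rw [Matrix.smul_single, smul_eq_mul, mul_one]
      · rw [dif_neg hij]
        show Matrix.single i j ((y : Matrix (Fin (n + 1)) (Fin (n + 1)) ℝ) i j) =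
          (y : Matrix (Fin (n + 1)) (Fin (n + 1)) ℝ) i j • (0 : Matrix (Fin (n + 1)) (Fin (n + 1)) ℝ)
        rw [y.2 i j (not_lt.mp hij), Matrix.single_zero, smul_zero]
    rw [hy, map_sum]
    refine Finset.sum_eq_zero fun i _ => ?_
    rw [map_sum]
    refine Finset.sum_eq_zero fun j _ => ?_
    rw [map_smul, smul_eq_mul]
    by_cases hij : i < j
    · rw [dif_pos hij, key i j hij, mul_zero]
    · rw [dif_neg hij, map_zero, mul_zero]
end

section
/- Let n ≥ 3 and let 𝔱 be the real Lie algebra of strictly upper triangular (n+1)×(n+1) real matrices. Then for every s ≥ 0 the product Lie algebra ℝ^s × 𝔱 (with ℝ^s abelian) admits no symplectic structure. -/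
set_option synthInstance.maxHeartbeats 1000000

attribute [local instance 100] LieRing.ofAssociativeRing

/-- Elementary strictly upper triangular matrix. -/
def eMat (m : ℕ) (i j : Fin m) (hij : i < j) : strictUpper m :=
  ⟨Matrix.single i j 1, fun p q hpq => by
    apply Matrix.single_apply_of_ne
    rintro ⟨rfl, rfl⟩
    exact absurd hpq (not_le.mpr hij)⟩

lemma eMat_val (m : ℕ) (i j : Fin m) (hij : i < j) :
    (eMat m i j hij : Matrix (Fin m) (Fin m) ℝ) = Matrix.single i j 1 := rfl

lemma eMat_bracket_same {m : ℕ} {i j l : Fin m} (hij : i < j) (hjl : j < l) :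
    ⁅eMat m i j hij, eMat m j l hjl⁆ = eMat m i l (hij.trans hjl) := by
  apply Subtype.ext
  rw [LieSubalgebra.coe_bracket, eMat_val, eMat_val, eMat_val, Ring.lie_def,
    Matrix.single_mul_single_same,
    Matrix.single_mul_single_of_ne (h := (hij.trans hjl).ne'), one_mul, sub_zero]

lemma eMat_bracket_same_rev {m : ℕ} {i j l : Fin m} (hij : i < j) (hjl : j < l) :
    ⁅eMat m j l hjl, eMat m i j hij⁆ = -eMat m i l (hij.trans hjl) := by
  rw [← lie_skew, eMat_bracket_same hij hjl]

lemma eMat_bracket_zero {m : ℕ} {i j k l : Fin m} (hij : i < j) (hkl : k < l)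
    (h1 : j ≠ k) (h2 : l ≠ i) :
    ⁅eMat m i j hij, eMat m k l hkl⁆ = 0 := by
  apply Subtype.ext
  rw [LieSubalgebra.coe_bracket, eMat_val, eMat_val, Ring.lie_def,
    Matrix.single_mul_single_of_ne (h := h1),
    Matrix.single_mul_single_of_ne (h := h2), sub_zero]
  simp

lemma prod_bracket {L M : Type*} [LieRing L] [LieRing M] (p q : L × M) :
    ⁅p, q⁆ = (⁅p.1, q.1⁆, ⁅p.2, q.2⁆) := rfl

lemma mem_strictUpper {m : ℕ} {X : Matrix (Fin m) (Fin m) ℝ} (hX : X ∈ strictUpper m) :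
    ∀ i j : Fin m, j ≤ i → X i j = 0 := hX

lemma strictUpper_coe_smul {m : ℕ} (c : ℝ) (x : strictUpper m) :
    ((c • x : strictUpper m) : Matrix (Fin m) (Fin m) ℝ) = c • (x : Matrix (Fin m) (Fin m) ℝ) :=
  rfl

lemma fin_mk_ne {m a b : ℕ} (ha : a < m) (hb : b < m) (h : a ≠ b) :
    (⟨a, ha⟩ : Fin m) ≠ ⟨b, hb⟩ := by simpa [Fin.ext_iff] using h

lemma fin_mk_lt {m a b : ℕ} (ha : a < m) (hb : b < m) (h : a < b) :
    (⟨a, ha⟩ : Fin m) < ⟨b, hb⟩ := by simpa [Fin.mk_lt_mk] using h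

set_option maxHeartbeats 2000000 in
/-- Main computation: any skew bilinear form on `strictUpper m` satisfying the cocycle
identity kills the corner matrix against everything. -/
lemma Omega_vanish {m : ℕ} (hm : 4 ≤ m)
    (Ω : strictUpper m →ₗ[ℝ] strictUpper m →ₗ[ℝ] ℝ)
    (skewΩ : ∀ a b, Ω a b = -Ω b a)
    (keyω : ∀ a b d : strictUpper m, Ω ⁅a, b⁆ d + Ω ⁅b, d⁆ a + Ω ⁅d, a⁆ b = 0)
    (h0N : (⟨0, by omega⟩ : Fin m) < ⟨m - 1, by omega⟩)
    (Z : strictUpper m) :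
    Ω (eMat m ⟨0, by omega⟩ ⟨m - 1, by omega⟩ h0N) Z = 0 := by
  have trick : ∀ a b d : strictUpper m, ⁅b, d⁆ = 0 → ⁅d, a⁆ = 0 →
      Ω ⁅a, b⁆ d = 0 := by
    intro a b d h1 h2
    have h := keyω a b d
    rw [h1, h2] at h
    simpa using h
  have pm0 : 0 < m := by omega
  have pm1 : 1 < m := by omega
  have pm2 : 2 < m := by omega
  have pmN : m - 1 < m := by omega
  have h0N' : (⟨0, pm0⟩ : Fin m) < ⟨m - 1, pmN⟩ := fin_mk_lt _ _ (by omega)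
  have h01 : (⟨0, pm0⟩ : Fin m) < ⟨1, pm1⟩ := fin_mk_lt _ _ (by omega)
  have h12 : (⟨1, pm1⟩ : Fin m) < ⟨2, pm2⟩ := fin_mk_lt _ _ (by omega)
  have h02 : (⟨0, pm0⟩ : Fin m) < ⟨2, pm2⟩ := fin_mk_lt _ _ (by omega)
  have h1N : (⟨1, pm1⟩ : Fin m) < ⟨m - 1, pmN⟩ := fin_mk_lt _ _ (by omega)
  have h2N : (⟨2, pm2⟩ : Fin m) < ⟨m - 1, pmN⟩ := fin_mk_lt _ _ (by omega)
  show Ω (eMat m ⟨0, pm0⟩ ⟨m - 1, pmN⟩ h0N') Z = 0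
  have hpair : ∀ (i j : Fin m) (hij : i < j),
      Ω (eMat m ⟨0, pm0⟩ ⟨m - 1, pmN⟩ h0N') (eMat m i j hij) = 0 := by
    intro i j hij
    have hij' : (i : ℕ) < (j : ℕ) := hij
    have hjm : (j : ℕ) < m := j.isLt
    by_cases hsp : (i : ℕ) = 1 ∧ (j : ℕ) = 2
    · have hie : i = ⟨1, pm1⟩ := Fin.ext hsp.1
      have hje : j = ⟨2, pm2⟩ := Fin.ext hsp.2
      clear hsp hij' hjm
      subst hie; subst hje
      have b1 : ⁅eMat m ⟨0, pm0⟩ ⟨1, pm1⟩ h01, eMat m ⟨1, pm1⟩ ⟨m - 1, pmN⟩ h1N⁆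
          = eMat m ⟨0, pm0⟩ ⟨m - 1, pmN⟩ h0N' := eMat_bracket_same h01 h1N
      have b2 : ⁅eMat m ⟨1, pm1⟩ ⟨m - 1, pmN⟩ h1N, eMat m ⟨1, pm1⟩ ⟨2, pm2⟩ h12⁆
          = 0 := eMat_bracket_zero h1N h12 (fin_mk_ne _ _ (by omega)) (fin_mk_ne _ _ (by omega))
      have b3 : ⁅eMat m ⟨1, pm1⟩ ⟨2, pm2⟩ h12, eMat m ⟨0, pm0⟩ ⟨1, pm1⟩ h01⁆
          = -eMat m ⟨0, pm0⟩ ⟨2, pm2⟩ h02 := eMat_bracket_same_rev h01 h12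
      have b4 : ⁅eMat m ⟨0, pm0⟩ ⟨2, pm2⟩ h02, eMat m ⟨2, pm2⟩ ⟨m - 1, pmN⟩ h2N⁆
          = eMat m ⟨0, pm0⟩ ⟨m - 1, pmN⟩ h0N' := eMat_bracket_same h02 h2N
      have b5 : ⁅eMat m ⟨2, pm2⟩ ⟨m - 1, pmN⟩ h2N, eMat m ⟨1, pm1⟩ ⟨2, pm2⟩ h12⁆
          = -eMat m ⟨1, pm1⟩ ⟨m - 1, pmN⟩ h1N := eMat_bracket_same_rev h12 h2N
      have b6 : ⁅eMat m ⟨1, pm1⟩ ⟨2, pm2⟩ h12, eMat m ⟨0, pm0⟩ ⟨2, pm2⟩ h02⁆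
          = 0 := eMat_bracket_zero h12 h02 (fin_mk_ne _ _ (by omega)) (fin_mk_ne _ _ (by omega))
      have e1 := keyω (eMat m ⟨0, pm0⟩ ⟨1, pm1⟩ h01)
        (eMat m ⟨1, pm1⟩ ⟨m - 1, pmN⟩ h1N) (eMat m ⟨1, pm1⟩ ⟨2, pm2⟩ h12)
      have e2 := keyω (eMat m ⟨0, pm0⟩ ⟨2, pm2⟩ h02)
        (eMat m ⟨2, pm2⟩ ⟨m - 1, pmN⟩ h2N) (eMat m ⟨1, pm1⟩ ⟨2, pm2⟩ h12)
      simp only [b1, b2, b3, map_zero, map_neg, LinearMap.zero_apply, LinearMap.neg_apply,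
        add_zero, zero_add] at e1
      simp only [b4, b5, b6, map_zero, map_neg, LinearMap.zero_apply, LinearMap.neg_apply,
        add_zero, zero_add] at e2
      have hsk := skewΩ (eMat m ⟨1, pm1⟩ ⟨m - 1, pmN⟩ h1N) (eMat m ⟨0, pm0⟩ ⟨2, pm2⟩ h02)
      linarith
    · obtain ⟨k, hk0, hkn, hki, hkj⟩ :
          ∃ k : ℕ, 0 < k ∧ k < m - 1 ∧ k ≠ (i : ℕ) ∧ k ≠ (j : ℕ) := by
        refine ⟨if (i : ℕ) = 1 ∨ (j : ℕ) = 1 then 2 else 1, ?_⟩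
        split_ifs with h <;> omega
      have pmk : k < m := by omega
      have h0k : (⟨0, pm0⟩ : Fin m) < ⟨k, pmk⟩ := fin_mk_lt _ _ (by omega)
      have hkN : (⟨k, pmk⟩ : Fin m) < ⟨m - 1, pmN⟩ := fin_mk_lt _ _ (by omega)
      have b : ⁅eMat m ⟨0, pm0⟩ ⟨k, pmk⟩ h0k, eMat m ⟨k, pmk⟩ ⟨m - 1, pmN⟩ hkN⁆
          = eMat m ⟨0, pm0⟩ ⟨m - 1, pmN⟩ h0N' := eMat_bracket_same h0k hkN
      have h := trick (eMat m ⟨0, pm0⟩ ⟨k, pmk⟩ h0k)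
        (eMat m ⟨k, pmk⟩ ⟨m - 1, pmN⟩ hkN) (eMat m i j hij)
        (eMat_bracket_zero hkN hij
          (Fin.ne_of_val_ne (show m - 1 ≠ (i : ℕ) by omega))
          (Fin.ne_of_val_ne (show (j : ℕ) ≠ k by omega)))
        (eMat_bracket_zero hij h0k
          (Fin.ne_of_val_ne (show (j : ℕ) ≠ 0 by omega))
          (Fin.ne_of_val_ne (show k ≠ (i : ℕ) by omega)))
      simp only [b] at h
      exact h
  have hZ : Z = ∑ i : Fin m, ∑ j : Fin m, (Z : Matrix (Fin m) (Fin m) ℝ) i j •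
      (if h : i < j then eMat m i j h else 0) := by
    apply Subtype.ext
    rw [AddSubmonoidClass.coe_finset_sum]
    conv_lhs => rw [Matrix.matrix_eq_sum_single (Z : Matrix (Fin m) (Fin m) ℝ)]
    refine Finset.sum_congr rfl fun i _ => ?_
    rw [AddSubmonoidClass.coe_finset_sum]
    refine Finset.sum_congr rfl fun j _ => ?_
    by_cases h : i < j
    · simp only [h, dif_pos, strictUpper_coe_smul, eMat_val,
        Matrix.smul_single, smul_eq_mul, mul_one]
    · have hz : (Z : Matrix (Fin m) (Fin m) ℝ) i j = 0 :=
        mem_strictUpper Z.2 i j (not_lt.mp h)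
      rw [hz]
      simp [h, Matrix.single_zero]
  rw [hZ, map_sum]
  refine Finset.sum_eq_zero fun i _ => ?_
  rw [map_sum]
  refine Finset.sum_eq_zero fun j _ => ?_
  rw [map_smul]
  by_cases h : i < j
  · simp only [dif_pos h, hpair i j h, smul_zero]
  · simp only [dif_neg h, map_zero, smul_zero]

set_option maxHeartbeats 2000000 in
/-- For `n ≥ 3`, no trivial extension `ℝ^s × 𝔱` of the Lie algebra of strictly upper triangular
`(n+1) × (n+1)` real matrices admits a symplectic structure. -/
theorem no_symplectic_on_strictUpper_extension (n : ℕ) (hn : 3 ≤ n) (s : ℕ) :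
    ¬ ∃ ω : ((Fin s → ℝ) × strictUpper (n + 1)) →ₗ[ℝ]
        ((Fin s → ℝ) × strictUpper (n + 1)) →ₗ[ℝ] ℝ,
      IsSymplecticForm ω := by
  rintro ⟨ω, hAlt, hClosed, hNondeg⟩
  have skew : ∀ x y, ω x y = -ω y x := by
    intro x y
    have h := hAlt (x + y)
    simp only [map_add, LinearMap.add_apply, hAlt x, hAlt y] at h
    linarith
  obtain ⟨Ω, hΩapp⟩ : ∃ Ω : strictUpper (n+1) →ₗ[ℝ] strictUpper (n+1) →ₗ[ℝ] ℝ,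
      ∀ a b : strictUpper (n+1), Ω a b = ω ((0 : Fin s → ℝ), a) ((0 : Fin s → ℝ), b) :=
    ⟨LinearMap.compl₂ (ω.comp (LinearMap.inr ℝ (Fin s → ℝ) (strictUpper (n+1))))
      (LinearMap.inr ℝ (Fin s → ℝ) (strictUpper (n+1))), fun a b => rfl⟩
  have skewΩ : ∀ a b : strictUpper (n+1), Ω a b = -Ω b a := by
    intro a b
    rw [hΩapp, hΩapp]
    exact skew _ _
  have keyω : ∀ a b d : strictUpper (n+1),
      Ω ⁅a, b⁆ d + Ω ⁅b, d⁆ a + Ω ⁅d, a⁆ b = 0 := by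
    intro a b d
    have h := hClosed ((0 : Fin s → ℝ), a) ((0 : Fin s → ℝ), b) ((0 : Fin s → ℝ), d)
    simp only [prod_bracket, zero_lie] at h
    simpa only [hΩapp] using h
  have h0N : (⟨0, by omega⟩ : Fin (n+1)) < ⟨n + 1 - 1, by omega⟩ := fin_mk_lt _ _ (by omega)
  have h01 : (⟨0, by omega⟩ : Fin (n+1)) < ⟨1, by omega⟩ := fin_mk_lt _ _ (by omega)
  have h1N : (⟨1, by omega⟩ : Fin (n+1)) < ⟨n + 1 - 1, by omega⟩ := fin_mk_lt _ _ (by omega)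
  have hXzero : ∀ Z : strictUpper (n+1),
      ω ((0 : Fin s → ℝ), eMat (n+1) ⟨0, by omega⟩ ⟨n + 1 - 1, by omega⟩ h0N)
        ((0 : Fin s → ℝ), Z) = 0 := by
    intro Z
    have h := Omega_vanish (by omega) Ω skewΩ keyω h0N Z
    simp only [hΩapp] at h
    exact h
  have hVzero : ∀ v : Fin s → ℝ,
      ω ((0 : Fin s → ℝ), eMat (n+1) ⟨0, by omega⟩ ⟨n + 1 - 1, by omega⟩ h0N)
        ((v, 0) : (Fin s → ℝ) × strictUpper (n+1)) = 0 := by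
    intro v
    have h := hClosed ((0 : Fin s → ℝ), eMat (n+1) ⟨0, by omega⟩ ⟨1, by omega⟩ h01)
      ((0 : Fin s → ℝ), eMat (n+1) ⟨1, by omega⟩ ⟨n + 1 - 1, by omega⟩ h1N)
      ((v, 0) : (Fin s → ℝ) × strictUpper (n+1))
    simp only [prod_bracket, zero_lie, lie_zero, eMat_bracket_same h01 h1N] at h
    simpa [← Prod.zero_eq_mk] using h
  have hcne : (((0 : Fin s → ℝ),
      eMat (n+1) ⟨0, by omega⟩ ⟨n + 1 - 1, by omega⟩ h0N) :
      (Fin s → ℝ) × strictUpper (n+1)) ≠ 0 := by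
    intro h
    have h2 : eMat (n+1) ⟨0, by omega⟩ ⟨n + 1 - 1, by omega⟩ h0N = 0 := congrArg Prod.snd h
    have h3 := congrArg (fun M : strictUpper (n+1) =>
      (M : Matrix (Fin (n+1)) (Fin (n+1)) ℝ) ⟨0, by omega⟩ ⟨n + 1 - 1, by omega⟩) h2
    have h4 : (1 : ℝ) = 0 := by simpa [eMat_val, Matrix.single_apply_same] using h3
    exact one_ne_zero h4
  obtain ⟨y, hy⟩ := hNondeg _ hcne
  apply hy
  have hysplit : y = ((y.1, 0) : (Fin s → ℝ) × strictUpper (n+1)) + (0, y.2) := by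
    ext <;> simp
  rw [hysplit, map_add, hVzero y.1, hXzero y.2, add_zero]
end

section
/- Let n ≥ 3, let S be the (2n+1)×(2n+1) real matrix with entries S_{i,2n+2-i} = 1 for all i and all other entries 0, and let 𝔫 = { X ∈ M_{2n+1}(ℝ) : X is strictly upper triangular and XᵀS + SX = 0 }, a Lie subalgebra of gl(2n+1,ℝ) under the commutator bracket (the nilradical of the minimal parabolic subalgebra of the split form so(n,n+1) of so(2n+1,ℂ)). Then 𝔫 is nilpotent and E_∞^{0,2}(𝔫) = 0: for every j with 𝔫^j ≠ 0 and 𝔫^{j+1} = 0, every closed 2-form ω on 𝔫 satisfies ω(x,y) = 0 for all x ∈ 𝔫^j, y ∈ 𝔫. Consequently, for every s ≥ 0 the product Lie algebra ℝ^s × 𝔫 admits no symplectic structure. -/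
set_option synthInstance.maxHeartbeats 1000000

open Matrix

attribute [local instance 100] LieRing.ofAssociativeRing

/-- The Lie algebra of strictly upper triangular matrices `X` with `Xᵀ J + J X = 0`. -/
def nilradOf {m : ℕ} (J : Matrix (Fin m) (Fin m) ℝ) :
    LieSubalgebra ℝ (Matrix (Fin m) (Fin m) ℝ) where
  carrier := {X | (∀ i j : Fin m, j ≤ i → X i j = 0) ∧ Xᵀ * J + J * X = 0}
  add_mem' := fun {X Y} hX hY => by
    refine ⟨fun i j h => by simp [Matrix.add_apply, hX.1 i j h, hY.1 i j h], ?_⟩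
    have h1 := hX.2
    have h2 := hY.2
    calc (Xᵀ + Yᵀ) * J + J * (X + Y) = (Xᵀ * J + J * X) + (Yᵀ * J + J * Y) := by
          rw [add_mul, mul_add]; abel
      _ = 0 := by rw [h1, h2, add_zero]
  zero_mem' := ⟨fun i j _ => rfl, by simp⟩
  smul_mem' := fun t {X} hX => by
    refine ⟨fun i j h => by simp [Matrix.smul_apply, hX.1 i j h], ?_⟩
    rw [Matrix.transpose_smul, Matrix.smul_mul, Matrix.mul_smul, ← smul_add, hX.2, smul_zero]
  lie_mem' := fun {X Y} hX hY => by
    refine ⟨fun i j h => by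
      rw [Ring.lie_def, Matrix.sub_apply, strict_mul_zero X Y hX.1 hY.1 h,
        strict_mul_zero Y X hY.1 hX.1 h, sub_zero], ?_⟩
    have hX' : Xᵀ * J = -(J * X) := eq_neg_of_add_eq_zero_left hX.2
    have hY' : Yᵀ * J = -(J * Y) := eq_neg_of_add_eq_zero_left hY.2
    have e1 : Yᵀ * Xᵀ * J = J * Y * X := by
      rw [mul_assoc, hX', mul_neg, ← mul_assoc, hY', neg_mul, neg_neg]
    have e2 : Xᵀ * Yᵀ * J = J * X * Y := by
      rw [mul_assoc, hY', mul_neg, ← mul_assoc, hX', neg_mul, neg_neg]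
    rw [Ring.lie_def, Matrix.transpose_sub, Matrix.transpose_mul, Matrix.transpose_mul,
      sub_mul, e1, e2, mul_sub]
    noncomm_ring


/-- The defining matrix of the symmetric form for `so(n, n+1)` (1-indexed:
`S_{i, 2n+2-i} = 1` for all `i`). -/
def soOddS (n : ℕ) : Matrix (Fin (2 * n + 1)) (Fin (2 * n + 1)) ℝ :=
  Matrix.of fun i j => if (i : ℕ) + (j : ℕ) = 2 * n then 1 else 0

namespace SoOddAux

variable (n : ℕ)

/-- entry matrix with ℕ indices (0 if out of range) -/
def Em (a b : ℕ) : Matrix (Fin (2*n+1)) (Fin (2*n+1)) ℝ :=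
  Matrix.of fun i j => if (i:ℕ) = a ∧ (j:ℕ) = b then 1 else 0

lemma Em_apply (a b : ℕ) (i j : Fin (2*n+1)) :
    Em n a b i j = if (i:ℕ) = a ∧ (j:ℕ) = b then 1 else 0 := rfl

lemma Em_mul_eq (a b c d : ℕ) (hbc : b = c) (hb : b < 2*n+1) :
    Em n a b * Em n c d = Em n a d := by
  subst hbc
  ext i j
  rw [Matrix.mul_apply, Finset.sum_eq_single (⟨b, hb⟩ : Fin (2*n+1))]
  · simp only [Em_apply]
    by_cases hia : (i:ℕ) = a <;> by_cases hjd : (j:ℕ) = d <;> simp [hia, hjd]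
  · intro x _ hx
    have hxb : (x:ℕ) ≠ b := fun hh => hx (Fin.ext hh)
    rw [Em_apply, if_neg (fun hc => hxb hc.2), zero_mul]
  · intro h; exact absurd (Finset.mem_univ _) h

lemma Em_mul_ne (a b c d : ℕ) (hbc : b ≠ c) :
    Em n a b * Em n c d = 0 := by
  ext i j
  rw [Matrix.mul_apply]
  refine Finset.sum_eq_zero fun x _ => ?_
  rw [Em_apply, Em_apply]
  by_cases h1 : (x:ℕ) = c
  · rw [if_neg (fun hc : (i:ℕ) = a ∧ (x:ℕ) = b => hbc (hc.2.symm.trans h1)), zero_mul]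
  · rw [if_neg (fun hc : (x:ℕ) = c ∧ (j:ℕ) = d => h1 hc.1), mul_zero]

/-- The basis-type elements. -/
def gm (a b : ℕ) : Matrix (Fin (2*n+1)) (Fin (2*n+1)) ℝ :=
  Em n a b - Em n (2*n-b) (2*n-a)


lemma gm_lie_zero {a b c d : ℕ} (hbc : b ≠ c) (hda : d ≠ a) (hbd : b + d ≠ 2*n)
    (hac : a + c ≠ 2*n) (ha : a ≤ 2*n) (hb : b ≤ 2*n) (hc : c ≤ 2*n) (hd : d ≤ 2*n) :
    ⁅gm n a b, gm n c d⁆ = 0 := by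
  rw [Ring.lie_def]
  simp only [gm, sub_mul, mul_sub]
  rw [Em_mul_ne n a b c d hbc,
      Em_mul_ne n a b (2*n-d) (2*n-c) (by omega),
      Em_mul_ne n (2*n-b) (2*n-a) c d (by omega),
      Em_mul_ne n (2*n-b) (2*n-a) (2*n-d) (2*n-c) (by omega),
      Em_mul_ne n c d a b hda,
      Em_mul_ne n c d (2*n-b) (2*n-a) (by omega),
      Em_mul_ne n (2*n-d) (2*n-c) a b (by omega),
      Em_mul_ne n (2*n-d) (2*n-c) (2*n-b) (2*n-a) (by omega)]
  abel

lemma gm_lie_chain {a b c : ℕ} (hac : a ≠ c) (hab : a + b ≠ 2*n) (hbc : b + c ≠ 2*n)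
    (ha : a ≤ 2*n) (hb : b ≤ 2*n) (hc : c ≤ 2*n) :
    ⁅gm n a b, gm n b c⁆ = gm n a c := by
  rw [Ring.lie_def]
  simp only [gm, sub_mul, mul_sub]
  rw [Em_mul_eq n a b b c rfl (by omega),
      Em_mul_ne n a b (2*n-c) (2*n-b) (by omega),
      Em_mul_ne n (2*n-b) (2*n-a) b c (by omega),
      Em_mul_ne n (2*n-b) (2*n-a) (2*n-c) (2*n-b) (by omega),
      Em_mul_ne n b c a b (by omega),
      Em_mul_ne n b c (2*n-b) (2*n-a) (by omega),
      Em_mul_ne n (2*n-c) (2*n-b) a b (by omega),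
      Em_mul_eq n (2*n-c) (2*n-b) (2*n-b) (2*n-a) rfl (by omega)]
  abel

lemma gm_lie_anti {a b c : ℕ} (hbc : b ≠ c) (hab : a + b ≠ 2*n) (hac : a + c ≠ 2*n)
    (ha : a ≤ 2*n) (hb : b ≤ 2*n) (hc : c ≤ 2*n) :
    ⁅gm n a b, gm n c (2*n-b)⁆ = -gm n a (2*n-c) := by
  have e1 : 2*n - (2*n-b) = b := by omega
  have e2 : 2*n - (2*n-c) = c := by omega
  rw [Ring.lie_def]
  simp only [gm, e1, e2, sub_mul, mul_sub]
  rw [Em_mul_ne n a b c (2*n-b) hbc,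
      Em_mul_eq n a b b (2*n-c) rfl (by omega),
      Em_mul_ne n (2*n-b) (2*n-a) c (2*n-b) (by omega),
      Em_mul_ne n (2*n-b) (2*n-a) b (2*n-c) (by omega),
      Em_mul_ne n c (2*n-b) a b (by omega),
      Em_mul_eq n c (2*n-b) (2*n-b) (2*n-a) rfl (by omega),
      Em_mul_ne n b (2*n-c) a b (by omega),
      Em_mul_ne n b (2*n-c) (2*n-b) (2*n-a) (by omega)]
  abel


variable {n}

/-- reversal map -/
def rv (x : Fin (2*n+1)) : Fin (2*n+1) := ⟨2*n - (x:ℕ), by omega⟩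

@[simp] lemma rv_val (x : Fin (2*n+1)) : ((rv x : Fin (2*n+1)) : ℕ) = 2*n - (x:ℕ) := rfl

lemma mem_nilradOf_iff {X : Matrix (Fin (2*n+1)) (Fin (2*n+1)) ℝ} :
    X ∈ nilradOf (soOddS n) ↔ (∀ i j : Fin (2*n+1), j ≤ i → X i j = 0) ∧
      (∀ a b : Fin (2*n+1), X a b + X (rv b) (rv a) = 0) := by
  have key : ∀ i j : Fin (2*n+1), (Xᵀ * soOddS n + soOddS n * X) i j
      = X (rv j) i + X (rv i) j := by
    intro i j
    rw [Matrix.add_apply, Matrix.mul_apply, Matrix.mul_apply]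
    congr 1
    · rw [Finset.sum_eq_single (rv j)]
      · rw [Matrix.transpose_apply]
        have : soOddS n (rv j) j = 1 := by
          show (if ((rv j : Fin (2*n+1)):ℕ) + (j:ℕ) = 2*n then (1:ℝ) else 0) = 1
          rw [if_pos]; have := j.isLt; simp; omega
        rw [this, mul_one]
      · intro c _ hc
        have hcj : (c:ℕ) + (j:ℕ) ≠ 2*n := by
          intro hh
          exact hc (Fin.ext (by have := j.isLt; simp; omega))
        rw [Matrix.transpose_apply]
        have : soOddS n c j = 0 := by
          show (if (c:ℕ) + (j:ℕ) = 2*n then (1:ℝ) else 0) = 0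
          rw [if_neg hcj]
        rw [this, mul_zero]
      · intro h; exact absurd (Finset.mem_univ _) h
    · rw [Finset.sum_eq_single (rv i)]
      · have : soOddS n i (rv i) = 1 := by
          show (if (i:ℕ) + ((rv i : Fin (2*n+1)):ℕ) = 2*n then (1:ℝ) else 0) = 1
          rw [if_pos]; have := i.isLt; simp; omega
        rw [this, one_mul]
      · intro c _ hc
        have hic : (i:ℕ) + (c:ℕ) ≠ 2*n := by
          intro hh
          exact hc (Fin.ext (by have := i.isLt; simp; omega))
        have : soOddS n i c = 0 := by
          show (if (i:ℕ) + (c:ℕ) = 2*n then (1:ℝ) else 0) = 0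
          rw [if_neg hic]
        rw [this, zero_mul]
      · intro h; exact absurd (Finset.mem_univ _) h
  constructor
  · rintro ⟨h1, h2⟩
    refine ⟨h1, fun a b => ?_⟩
    have hz : (Xᵀ * soOddS n + soOddS n * X) (rv a) b = 0 := by rw [h2]; rfl
    rw [key] at hz
    have hra : rv (rv a) = a := Fin.ext (by have := a.isLt; simp; omega)
    rw [hra] at hz
    linarith [hz]
  · rintro ⟨h1, h2⟩
    refine ⟨h1, ?_⟩
    ext i j
    rw [key]
    have hrr : rv (rv i) = i := Fin.ext (by have := i.isLt; simp; omega)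
    have := h2 (rv i) j
    rw [hrr] at this
    show X (rv j) i + X (rv i) j = 0
    linarith [this]

lemma gm_mem {a b : ℕ} (h1 : a < b) (h2 : b ≤ 2*n) : gm n a b ∈ nilradOf (soOddS n) := by
  rw [mem_nilradOf_iff]
  constructor
  · intro i j hij
    have hij' : (j:ℕ) ≤ (i:ℕ) := hij
    have hi := i.isLt; have hj := j.isLt
    show Em n a b i j - Em n (2*n-b) (2*n-a) i j = 0
    rw [Em_apply, Em_apply, if_neg (by omega), if_neg (by omega)]
    norm_num
  · intro p q
    have hp := p.isLt; have hq := q.isLt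
    show (Em n a b p q - Em n (2*n-b) (2*n-a) p q)
      + (Em n a b (rv q) (rv p) - Em n (2*n-b) (2*n-a) (rv q) (rv p)) = 0
    rw [Em_apply, Em_apply, Em_apply, Em_apply]
    simp only [rv_val]
    by_cases c1 : (p:ℕ) = a ∧ (q:ℕ) = b <;> by_cases c2 : (p:ℕ) = 2*n-b ∧ (q:ℕ) = 2*n-a <;>
      by_cases c3 : 2*n-(q:ℕ) = a ∧ 2*n-(p:ℕ) = b <;>
      by_cases c4 : 2*n-(q:ℕ) = 2*n-b ∧ 2*n-(p:ℕ) = 2*n-a <;>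
      simp only [c1, c2, c3, c4, if_true, if_false] <;> (try (exfalso; omega)) <;> norm_num <;>
      split_ifs <;> (try (exfalso; omega)) <;> norm_num


/-- total basis element of the subalgebra -/
def gE (n a b : ℕ) : nilradOf (soOddS n) :=
  if h : a < b ∧ b ≤ 2*n then ⟨gm n a b, gm_mem h.1 h.2⟩ else 0

lemma gE_coe {m a b : ℕ} (h1 : a < b) (h2 : b ≤ 2*m) :
    ((gE m a b : nilradOf (soOddS m)) : Matrix (Fin (2*m+1)) (Fin (2*m+1)) ℝ) = gm m a b := by
  rw [gE, dif_pos ⟨h1, h2⟩]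

lemma lie_gE_eq {m : ℕ} {a b c d a' b' : ℕ} (h1 : a < b) (h2 : b ≤ 2*m) (h3 : c < d)
    (h4 : d ≤ 2*m) (h5 : a' < b') (h6 : b' ≤ 2*m)
    (h : ⁅gm m a b, gm m c d⁆ = gm m a' b') : ⁅gE m a b, gE m c d⁆ = gE m a' b' := by
  apply Subtype.ext
  rw [LieSubalgebra.coe_bracket, gE_coe h1 h2, gE_coe h3 h4, gE_coe h5 h6, h]

lemma lie_gE_neg {m : ℕ} {a b c d a' b' : ℕ} (h1 : a < b) (h2 : b ≤ 2*m) (h3 : c < d)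
    (h4 : d ≤ 2*m) (h5 : a' < b') (h6 : b' ≤ 2*m)
    (h : ⁅gm m a b, gm m c d⁆ = -gm m a' b') : ⁅gE m a b, gE m c d⁆ = -gE m a' b' := by
  apply Subtype.ext
  rw [LieSubalgebra.coe_bracket, gE_coe h1 h2, gE_coe h3 h4, h]
  show _ = -(gE m a' b' : Matrix (Fin (2*m+1)) (Fin (2*m+1)) ℝ)
  rw [gE_coe h5 h6]

lemma lie_gE_zero {m : ℕ} {a b c d : ℕ} (h1 : a < b) (h2 : b ≤ 2*m) (h3 : c < d)
    (h4 : d ≤ 2*m) (h : ⁅gm m a b, gm m c d⁆ = 0) : ⁅gE m a b, gE m c d⁆ = 0 := by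
  apply Subtype.ext
  rw [LieSubalgebra.coe_bracket, gE_coe h1 h2, gE_coe h3 h4, h]
  rfl

/-- the band filtration property -/
def PP (m t : ℕ) (X : Matrix (Fin (2*m+1)) (Fin (2*m+1)) ℝ) : Prop :=
  ∀ i j : Fin (2*m+1), (j:ℕ) < (i:ℕ) + t → X i j = 0

lemma PP_mul {m s t : ℕ} {X Y : Matrix (Fin (2*m+1)) (Fin (2*m+1)) ℝ}
    (hX : PP m s X) (hY : PP m t Y) : PP m (s+t) (X*Y) := by
  intro i j hij
  rw [Matrix.mul_apply]
  refine Finset.sum_eq_zero fun c _ => ?_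
  by_cases hc : (c:ℕ) < (i:ℕ) + s
  · rw [hX i c hc, zero_mul]
  · rw [hY c j (by omega), mul_zero]

lemma PP_lie {m s t : ℕ} {X Y : Matrix (Fin (2*m+1)) (Fin (2*m+1)) ℝ}
    (hX : PP m s X) (hY : PP m t Y) : PP m (s+t) ⁅X, Y⁆ := by
  intro i j hij
  rw [Ring.lie_def, Matrix.sub_apply, PP_mul hX hY i j hij,
    PP_mul hY hX i j (by omega), sub_zero]

lemma mem_PP_one {m : ℕ} {x : Matrix (Fin (2*m+1)) (Fin (2*m+1)) ℝ}
    (hx : x ∈ nilradOf (soOddS m)) : PP m 1 x := by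
  intro i j hij
  exact (mem_nilradOf_iff.mp hx).1 i j (by rw [Fin.le_def]; omega)

/-- the filtration as Lie submodules -/
def plcs (m t : ℕ) : LieSubmodule ℝ (nilradOf (soOddS m)) (nilradOf (soOddS m)) where
  carrier := {x | PP m (t+1) (x : Matrix (Fin (2*m+1)) (Fin (2*m+1)) ℝ)}
  add_mem' := fun {x y} hx hy => by
    intro i j hij
    show ((x:Matrix (Fin (2*m+1)) (Fin (2*m+1)) ℝ) + y) i j = 0
    rw [Matrix.add_apply, hx i j hij, hy i j hij, add_zero]
  zero_mem' := fun i j hij => rfl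
  smul_mem' := fun c x hx => by
    intro i j hij
    show (c • (x:Matrix (Fin (2*m+1)) (Fin (2*m+1)) ℝ)) i j = 0
    rw [Matrix.smul_apply, hx i j hij, smul_zero]
  lie_mem := fun {x y} hy => by
    intro i j hij
    show (⁅(x:Matrix (Fin (2*m+1)) (Fin (2*m+1)) ℝ), (y:Matrix (Fin (2*m+1)) (Fin (2*m+1)) ℝ)⁆) i j = 0
    exact PP_lie (mem_PP_one x.2) hy i j (by omega)

lemma mem_plcs {m t : ℕ} {x : nilradOf (soOddS m)} :
    x ∈ plcs m t ↔ PP m (t+1) (x : Matrix (Fin (2*m+1)) (Fin (2*m+1)) ℝ) := Iff.rfl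

lemma lcs_le_plcs (m t : ℕ) :
    LieModule.lowerCentralSeries ℝ (nilradOf (soOddS m)) (nilradOf (soOddS m)) t ≤ plcs m t := by
  induction t with
  | zero => exact fun x _ => mem_plcs.mpr (mem_PP_one x.2)
  | succ t ih =>
    rw [LieModule.lowerCentralSeries_succ]
    refine (LieSubmodule.lie_le_iff _ _ _).mpr (fun x _ y hy => mem_plcs.mpr ?_)
    intro i j hij
    have hcoe : ((⁅x, y⁆ : nilradOf (soOddS m)) : Matrix (Fin (2*m+1)) (Fin (2*m+1)) ℝ)
        = ⁅(x : Matrix (Fin (2*m+1)) (Fin (2*m+1)) ℝ), (y : Matrix (Fin (2*m+1)) (Fin (2*m+1)) ℝ)⁆ :=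
      rfl
    rw [hcoe]
    exact PP_lie (mem_PP_one x.2) (mem_plcs.mp (ih hy)) i j (by omega)


lemma gm_apply (m a b : ℕ) (i j : Fin (2*m+1)) :
    gm m a b i j = (if (i:ℕ) = a ∧ (j:ℕ) = b then 1 else 0)
      - (if (i:ℕ) = 2*m-b ∧ (j:ℕ) = 2*m-a then 1 else 0) := rfl

lemma lcs_top_eq_bot (m : ℕ) (hm : 3 ≤ m) :
    LieModule.lowerCentralSeries ℝ (nilradOf (soOddS m)) (nilradOf (soOddS m)) (2*m-1) = ⊥ := by
  rw [LieSubmodule.eq_bot_iff]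
  intro x hx
  have hP := mem_plcs.mp (lcs_le_plcs m (2*m-1) hx)
  have hsym := (mem_nilradOf_iff.mp x.2).2
  apply Subtype.ext
  show (x : Matrix (Fin (2*m+1)) (Fin (2*m+1)) ℝ) = 0
  ext i j
  rw [Matrix.zero_apply]
  by_cases hij : (j:ℕ) < (i:ℕ) + (2*m-1+1)
  · exact hP i j hij
  · have hi := i.isLt; have hj := j.isLt
    have h0 : (i:ℕ) = 0 ∧ (j:ℕ) = 2*m := by omega
    have hs := hsym i j
    have hrv : rv j = i := Fin.ext (by simp; omega)
    have hrv2 : rv i = j := Fin.ext (by simp; omega)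
    rw [hrv, hrv2] at hs
    linarith

lemma gE_mem_lcs (m : ℕ) (hm : 3 ≤ m) :
    ∀ t, t ≤ 2*m-2 → gE m 0 (t+1) ∈
      LieModule.lowerCentralSeries ℝ (nilradOf (soOddS m)) (nilradOf (soOddS m)) t := by
  intro t
  induction t with
  | zero => intro _; exact LieSubmodule.mem_top _
  | succ t ih =>
    intro ht
    have h : ⁅gm m 0 (t+1), gm m (t+1) (t+2)⁆ = gm m 0 (t+2) :=
      gm_lie_chain m (a:=0) (b:=t+1) (c:=t+2) (by omega) (by omega) (by omega)
        (by omega) (by omega) (by omega)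
    have h2 : ⁅gm m (t+1) (t+2), gm m 0 (t+1)⁆ = -gm m 0 (t+2) := by
      rw [← lie_skew, h]
    have hbr : ⁅gE m (t+1) (t+2), gE m 0 (t+1)⁆ = -gE m 0 (t+2) :=
      lie_gE_neg (by omega) (by omega) (by omega) (by omega) (by omega) (by omega) h2
    rw [LieModule.lowerCentralSeries_succ]
    have hmem := LieSubmodule.lie_mem_lie (LieSubmodule.mem_top (gE m (t+1) (t+2)))
      (ih (by omega))
    rw [hbr] at hmem
    exact neg_mem_iff.mp hmem

lemma gE_F_ne_zero (m : ℕ) (hm : 3 ≤ m) : gE m 0 (2*m-1) ≠ 0 := by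
  intro h
  have h2 : gm m 0 (2*m-1) (⟨0, by omega⟩ : Fin (2*m+1)) (⟨2*m-1, by omega⟩ : Fin (2*m+1)) = 1 := by
    rw [gm_apply]
    rw [if_pos (by constructor <;> simp), if_neg (by simp; omega)]
    norm_num
  rw [← gE_coe (m:=m) (a:=0) (b:=2*m-1) (by omega) (by omega), h] at h2
  simp at h2

lemma gm_entry_hi {m a b : ℕ} (i j : Fin (2*m+1)) (hi : (i:ℕ) = a) (hj : (j:ℕ) = b)
    (hs : a + b ≠ 2*m) (hb : b ≤ 2*m) : gm m a b i j = 1 := by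
  rw [gm_apply, if_pos ⟨hi, hj⟩, if_neg (by omega), sub_zero]

lemma gm_entry_lo {m a b : ℕ} (i j : Fin (2*m+1)) (hi : (i:ℕ) = 2*m-b) (hj : (j:ℕ) = 2*m-a)
    (hs : a + b ≠ 2*m) (hb : b ≤ 2*m) (ha : a ≤ 2*m) : gm m a b i j = -1 := by
  rw [gm_apply, if_neg (by omega), if_pos ⟨hi, hj⟩, zero_sub]

lemma gm_entry_zero {m a b : ℕ} (i j : Fin (2*m+1)) (h1 : ¬((i:ℕ) = a ∧ (j:ℕ) = b))
    (h2 : ¬((i:ℕ) = 2*m-b ∧ (j:ℕ) = 2*m-a)) : gm m a b i j = 0 := by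
  rw [gm_apply, if_neg h1, if_neg h2, sub_zero]

lemma lcs_char (m : ℕ) (hm : 3 ≤ m) {x : nilradOf (soOddS m)}
    (hx : x ∈ LieModule.lowerCentralSeries ℝ (nilradOf (soOddS m)) (nilradOf (soOddS m)) (2*m-2))
    (i0 j0 : Fin (2*m+1)) (hi0 : (i0:ℕ) = 0) (hj0 : (j0:ℕ) = 2*m-1) :
    x = ((x : Matrix (Fin (2*m+1)) (Fin (2*m+1)) ℝ) i0 j0) • gE m 0 (2*m-1) := by
  have hP := mem_plcs.mp (lcs_le_plcs m (2*m-2) hx)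
  have hsym := (mem_nilradOf_iff.mp x.2).2
  apply Subtype.ext
  show (x : Matrix (Fin (2*m+1)) (Fin (2*m+1)) ℝ)
    = ((x : Matrix (Fin (2*m+1)) (Fin (2*m+1)) ℝ) i0 j0)
      • ((gE m 0 (2*m-1) : nilradOf (soOddS m)) : Matrix (Fin (2*m+1)) (Fin (2*m+1)) ℝ)
  rw [gE_coe (by omega) (by omega)]
  ext i j
  rw [Matrix.smul_apply, smul_eq_mul]
  have hi := i.isLt; have hj := j.isLt
  by_cases h1 : (i:ℕ) = 0 ∧ (j:ℕ) = 2*m-1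
  · rw [gm_entry_hi i j h1.1 h1.2 (by omega) (by omega), mul_one]
    have e1 : i = i0 := Fin.ext (by omega)
    have e2 : j = j0 := Fin.ext (by omega)
    rw [e1, e2]
  · by_cases h2 : (i:ℕ) = 1 ∧ (j:ℕ) = 2*m
    · rw [gm_entry_lo i j (by omega) (by omega) (by omega) (by omega) (by omega)]
      have hs := hsym i j
      have e1 : rv j = i0 := Fin.ext (by simp; omega)
      have e2 : rv i = j0 := Fin.ext (by simp; omega)
      rw [e1, e2] at hs
      linarith
    · rw [gm_entry_zero i j (by omega) (by omega), mul_zero]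
      by_cases h3 : (j:ℕ) < (i:ℕ) + (2*m-2+1)
      · exact hP i j h3
      · have h0 : (i:ℕ) = 0 ∧ (j:ℕ) = 2*m := by omega
        have hs := hsym i j
        have e1 : rv j = i := Fin.ext (by simp; omega)
        have e2 : rv i = j := Fin.ext (by simp; omega)
        rw [e1, e2] at hs
        linarith


lemma exists_r (m k l : ℕ) (hm : 3 ≤ m) (hkl : k < l) (hsum : k + l < 2*m) (hl2 : 2 ≤ l)
    (hspec : ¬(m = 3 ∧ k = 2 ∧ l = 3)) :
    ∃ r, 2 ≤ r ∧ r ≤ 2*m-2 ∧ r ≠ k ∧ r ≠ l ∧ r + k ≠ 2*m ∧ r + l ≠ 2*m := by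
  by_contra hc
  have key : ∀ r : ℕ, 2 ≤ r → r ≤ 2*m-2 → (r = k ∨ r = l ∨ r + k = 2*m ∨ r + l = 2*m) := by
    intro r h1 h2
    by_contra h
    push_neg at h
    exact hc ⟨r, h1, h2, h.1, h.2.1, h.2.2.1, h.2.2.2⟩
  rcases Nat.lt_or_ge m 4 with hm4 | hm4
  · have k2 := key 2 (by omega) (by omega)
    have k3 := key 3 (by omega) (by omega)
    have k4 := key 4 (by omega) (by omega)
    omega
  · have k2 := key 2 (by omega) (by omega)
    have k3 := key 3 (by omega) (by omega)
    have k4 := key 4 (by omega) (by omega)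
    have k5 := key 5 (by omega) (by omega)
    have k6 := key 6 (by omega) (by omega)
    omega

lemma main_vanish (m : ℕ) (hm : 3 ≤ m)
    (ω : nilradOf (soOddS m) →ₗ[ℝ] nilradOf (soOddS m) →ₗ[ℝ] ℝ)
    (halt : ∀ x, ω x x = 0) (hcl : IsClosed2Form ω) :
    ∀ y, ω (gE m 0 (2*m-1)) y = 0 := by
  classical
  have hskew : ∀ x y, ω x y + ω y x = 0 := by
    intro x y
    have h := halt (x + y)
    simp only [map_add, LinearMap.add_apply] at h
    rw [halt x, halt y] at h
    linarith
  have hbase : ∀ k l : ℕ, k < l → k + l < 2*m → ω (gE m 0 (2*m-1)) (gE m k l) = 0 := by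
    intro k l hkl hsum
    by_cases hl1 : l = 1
    · subst hl1
      have hk0 : k = 0 := by omega
      subst hk0
      have Rq : ∀ a r : ℕ, 1 ≤ a → a ≠ r → a + r < 2*m → 2 ≤ r →
          ω (gE m 0 (2*m-r)) (gE m 0 r) + ω (gE m 0 (2*m-a)) (gE m 0 a) = 0 := by
        intro a r ha har hsum2 hr2
        have hb1 : ⁅gE m 0 a, gE m a (2*m-r)⁆ = gE m 0 (2*m-r) :=
          lie_gE_eq (by omega) (by omega) (by omega) (by omega) (by omega) (by omega)
            (gm_lie_chain m (by omega) (by omega) (by omega) (by omega) (by omega) (by omega))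
        have hb2' : ⁅gm m 0 r, gm m a (2*m-r)⁆ = -gm m 0 (2*m-a) :=
          gm_lie_anti m (by omega) (by omega) (by omega) (by omega) (by omega) (by omega)
        have hb2 : ⁅gE m a (2*m-r), gE m 0 r⁆ = gE m 0 (2*m-a) := by
          have h2 := lie_gE_neg (by omega) (by omega) (by omega) (by omega) (by omega)
            (by omega) hb2'
          rw [← lie_skew, h2, neg_neg]
        have hb3 : ⁅gE m 0 r, gE m 0 a⁆ = 0 :=
          lie_gE_zero (by omega) (by omega) (by omega) (by omega)
            (gm_lie_zero m (by omega) (by omega) (by omega) (by omega) (by omega) (by omega)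
              (by omega) (by omega))
        have hc := hcl (gE m 0 a) (gE m a (2*m-r)) (gE m 0 r)
        rw [hb1, hb2, hb3] at hc
        simpa using hc
      have h12 := Rq 1 2 (by omega) (by omega) (by omega) (by omega)
      have h13 := Rq 1 3 (by omega) (by omega) (by omega) (by omega)
      have h23 := Rq 2 3 (by omega) (by omega) (by omega) (by omega)
      linarith
    · by_cases hspec : m = 3 ∧ k = 2 ∧ l = 3
      · obtain ⟨hm3, hk2, hl3⟩ := hspec
        subst hm3; subst hk2; subst hl3
        show ω (gE 3 0 5) (gE 3 2 3) = 0
        -- brackets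
        have b1 : ⁅gE 3 0 1, gE 3 1 3⁆ = gE 3 0 3 :=
          lie_gE_eq (by norm_num) (by norm_num) (by norm_num) (by norm_num) (by norm_num)
            (by norm_num)
            (gm_lie_chain 3 (by norm_num) (by norm_num) (by norm_num) (by norm_num) (by norm_num)
              (by norm_num))
        have b2 : ⁅gE 3 1 3, gE 3 1 4⁆ = 0 :=
          lie_gE_zero (by norm_num) (by norm_num) (by norm_num) (by norm_num)
            (gm_lie_zero 3 (by norm_num) (by norm_num) (by norm_num) (by norm_num) (by norm_num)
              (by norm_num) (by norm_num) (by norm_num))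
        have b3' : ⁅gm 3 0 1, gm 3 1 4⁆ = gm 3 0 4 :=
          gm_lie_chain 3 (by norm_num) (by norm_num) (by norm_num) (by norm_num) (by norm_num)
            (by norm_num)
        have b3 : ⁅gE 3 1 4, gE 3 0 1⁆ = -gE 3 0 4 := by
          have h2 : ⁅gm 3 1 4, gm 3 0 1⁆ = -gm 3 0 4 := by rw [← lie_skew, b3']
          exact lie_gE_neg (by norm_num) (by norm_num) (by norm_num) (by norm_num) (by norm_num)
            (by norm_num) h2
        have b4 : ⁅gE 3 0 2, gE 3 1 4⁆ = -gE 3 0 5 := by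
          have h2 : ⁅gm 3 0 2, gm 3 1 4⁆ = -gm 3 0 5 :=
            gm_lie_anti 3 (by norm_num) (by norm_num) (by norm_num) (by norm_num) (by norm_num)
              (by norm_num)
          exact lie_gE_neg (by norm_num) (by norm_num) (by norm_num) (by norm_num) (by norm_num)
            (by norm_num) h2
        have b5 : ⁅gE 3 1 4, gE 3 2 3⁆ = 0 :=
          lie_gE_zero (by norm_num) (by norm_num) (by norm_num) (by norm_num)
            (gm_lie_zero 3 (by norm_num) (by norm_num) (by norm_num) (by norm_num) (by norm_num)
              (by norm_num) (by norm_num) (by norm_num))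
        have b6' : ⁅gm 3 0 2, gm 3 2 3⁆ = gm 3 0 3 :=
          gm_lie_chain 3 (by norm_num) (by norm_num) (by norm_num) (by norm_num) (by norm_num)
            (by norm_num)
        have b6 : ⁅gE 3 2 3, gE 3 0 2⁆ = -gE 3 0 3 := by
          have h2 : ⁅gm 3 2 3, gm 3 0 2⁆ = -gm 3 0 3 := by rw [← lie_skew, b6']
          exact lie_gE_neg (by norm_num) (by norm_num) (by norm_num) (by norm_num) (by norm_num)
            (by norm_num) h2
        have b7 : ⁅gE 3 0 3, gE 3 1 3⁆ = -gE 3 0 5 := by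
          have h2 : ⁅gm 3 0 3, gm 3 1 3⁆ = -gm 3 0 5 :=
            gm_lie_anti 3 (by norm_num) (by norm_num) (by norm_num) (by norm_num) (by norm_num)
              (by norm_num)
          exact lie_gE_neg (by norm_num) (by norm_num) (by norm_num) (by norm_num) (by norm_num)
            (by norm_num) h2
        have b8 : ⁅gE 3 1 3, gE 3 2 3⁆ = -gE 3 1 4 := by
          have h2 : ⁅gm 3 1 3, gm 3 2 3⁆ = -gm 3 1 4 :=
            gm_lie_anti 3 (by norm_num) (by norm_num) (by norm_num) (by norm_num) (by norm_num)
              (by norm_num)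
          exact lie_gE_neg (by norm_num) (by norm_num) (by norm_num) (by norm_num) (by norm_num)
            (by norm_num) h2
        have b9 : ⁅gE 3 2 3, gE 3 0 3⁆ = gE 3 0 4 := by
          have h2' : ⁅gm 3 0 3, gm 3 2 3⁆ = -gm 3 0 4 :=
            gm_lie_anti 3 (by norm_num) (by norm_num) (by norm_num) (by norm_num) (by norm_num)
              (by norm_num)
          have h2 : ⁅gm 3 2 3, gm 3 0 3⁆ = gm 3 0 4 := by
            rw [← lie_skew, h2', neg_neg]
          exact lie_gE_eq (by norm_num) (by norm_num) (by norm_num) (by norm_num) (by norm_num)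
            (by norm_num) h2
        have T1 := hcl (gE 3 0 1) (gE 3 1 3) (gE 3 1 4)
        rw [b1, b2, b3] at T1
        have T2 := hcl (gE 3 0 2) (gE 3 1 4) (gE 3 2 3)
        rw [b4, b5, b6] at T2
        have T3 := hcl (gE 3 0 3) (gE 3 1 3) (gE 3 2 3)
        rw [b7, b8, b9] at T3
        simp only [map_zero, map_neg, LinearMap.zero_apply, LinearMap.neg_apply,
          zero_add, add_zero] at T1 T2 T3
        have hs1 := hskew (gE 3 0 3) (gE 3 1 4)
        linarith
      · obtain ⟨r, hr2, hrb, hrk, hrl, hrk2, hrl2⟩ := exists_r m k l hm hkl hsum (by omega) hspec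
        have hb1 : ⁅gE m 0 r, gE m r (2*m-1)⁆ = gE m 0 (2*m-1) :=
          lie_gE_eq (by omega) (by omega) (by omega) (by omega) (by omega) (by omega)
            (gm_lie_chain m (by omega) (by omega) (by omega) (by omega) (by omega) (by omega))
        have hb2 : ⁅gE m r (2*m-1), gE m k l⁆ = 0 :=
          lie_gE_zero (by omega) (by omega) hkl (by omega)
            (gm_lie_zero m (by omega) (by omega) (by omega) (by omega) (by omega) (by omega)
              (by omega) (by omega))
        have hb3 : ⁅gE m k l, gE m 0 r⁆ = 0 :=
          lie_gE_zero hkl (by omega) (by omega) (by omega)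
            (gm_lie_zero m (by omega) (by omega) (by omega) (by omega) (by omega) (by omega)
              (by omega) (by omega))
        have hc := hcl (gE m 0 r) (gE m r (2*m-1)) (gE m k l)
        rw [hb1, hb2, hb3] at hc
        simpa using hc
  intro y
  have hup := (mem_nilradOf_iff.mp y.2).1
  have hsy := (mem_nilradOf_iff.mp y.2).2
  set T : Finset (Fin (2*m+1) × Fin (2*m+1)) :=
    Finset.univ.filter (fun p => (p.1:ℕ) < (p.2:ℕ) ∧ (p.1:ℕ) + (p.2:ℕ) < 2*m) with hT
  have hdec : y = ∑ p ∈ T,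
      ((y : Matrix (Fin (2*m+1)) (Fin (2*m+1)) ℝ) p.1 p.2) • gE m (p.1:ℕ) (p.2:ℕ) := by
    apply Subtype.ext
    rw [AddSubmonoidClass.coe_finset_sum]
    have step : ∀ p ∈ T, ((((y : Matrix (Fin (2*m+1)) (Fin (2*m+1)) ℝ) p.1 p.2)
          • gE m (p.1:ℕ) (p.2:ℕ) : nilradOf (soOddS m)) : Matrix (Fin (2*m+1)) (Fin (2*m+1)) ℝ)
        = ((y : Matrix (Fin (2*m+1)) (Fin (2*m+1)) ℝ) p.1 p.2) • gm m (p.1:ℕ) (p.2:ℕ) := by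
      intro p hp
      obtain ⟨hplt, hpsum⟩ := (Finset.mem_filter.mp hp).2
      have hcoesmul : ((((y : Matrix (Fin (2*m+1)) (Fin (2*m+1)) ℝ) p.1 p.2)
          • gE m (p.1:ℕ) (p.2:ℕ) : nilradOf (soOddS m)) : Matrix (Fin (2*m+1)) (Fin (2*m+1)) ℝ)
        = ((y : Matrix (Fin (2*m+1)) (Fin (2*m+1)) ℝ) p.1 p.2)
          • ((gE m (p.1:ℕ) (p.2:ℕ) : nilradOf (soOddS m)) :
              Matrix (Fin (2*m+1)) (Fin (2*m+1)) ℝ) := rfl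
      rw [hcoesmul, gE_coe hplt (by omega)]
    rw [Finset.sum_congr rfl step]
    ext i j
    rw [Matrix.sum_apply]
    have hi := i.isLt; have hj := j.isLt
    have hsplit : ∀ p ∈ T, (((y : Matrix (Fin (2*m+1)) (Fin (2*m+1)) ℝ) p.1 p.2)
          • gm m (p.1:ℕ) (p.2:ℕ)) i j
        = (if p = (i,j) then (y : Matrix (Fin (2*m+1)) (Fin (2*m+1)) ℝ) i j else 0)
          - (if p = (rv j, rv i) then
              (y : Matrix (Fin (2*m+1)) (Fin (2*m+1)) ℝ) (rv j) (rv i) else 0) := by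
      intro p hp
      obtain ⟨hplt, hpsum⟩ := (Finset.mem_filter.mp hp).2
      have hp1 := p.1.isLt; have hp2 := p.2.isLt
      rw [Matrix.smul_apply, gm_apply, smul_eq_mul, mul_sub]
      congr 1
      · by_cases hc : p = (i,j)
        · rw [if_pos hc, hc, if_pos ⟨rfl, rfl⟩, mul_one]
        · rw [if_neg (fun hcon => hc (Prod.ext (Fin.ext hcon.1.symm) (Fin.ext hcon.2.symm))),
            if_neg hc, mul_zero]
      · by_cases hc : p = (rv j, rv i)
        · rw [if_pos hc, hc, if_pos ⟨by simp; omega, by simp; omega⟩, mul_one]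
        · rw [if_neg (fun hcon => hc (Prod.ext (Fin.ext (by simp; omega))
            (Fin.ext (by simp; omega)))), if_neg hc, mul_zero]
    rw [Finset.sum_congr rfl hsplit, Finset.sum_sub_distrib,
      Finset.sum_ite_eq' T ((i,j) : Fin (2*m+1) × Fin (2*m+1)),
      Finset.sum_ite_eq' T ((rv j, rv i) : Fin (2*m+1) × Fin (2*m+1))]
    have hmem1 : (((i,j) : Fin (2*m+1) × Fin (2*m+1)) ∈ T)
        ↔ ((i:ℕ) < (j:ℕ) ∧ (i:ℕ)+(j:ℕ) < 2*m) := by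
      simp [hT]
    have hmem2 : (((rv j, rv i) : Fin (2*m+1) × Fin (2*m+1)) ∈ T)
        ↔ (2*m-(j:ℕ) < 2*m-(i:ℕ) ∧ (2*m-(j:ℕ))+(2*m-(i:ℕ)) < 2*m) := by
      rw [hT, Finset.mem_filter]
      exact ⟨fun h => h.2, fun h => ⟨Finset.mem_univ _, h⟩⟩
    by_cases h1 : (i:ℕ) < (j:ℕ) ∧ (i:ℕ)+(j:ℕ) < 2*m
    · rw [if_pos (hmem1.mpr h1), if_neg (fun hcon => by
        have := hmem2.mp hcon; omega)]
      ring
    · by_cases h2 : (i:ℕ) < (j:ℕ) ∧ (i:ℕ)+(j:ℕ) = 2*m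
      · rw [if_neg (fun hcon => by have := hmem1.mp hcon; omega),
          if_neg (fun hcon => by have := hmem2.mp hcon; omega)]
        have hs := hsy i j
        have e1 : rv j = i := Fin.ext (by simp; omega)
        have e2 : rv i = j := Fin.ext (by simp; omega)
        rw [e1, e2] at hs
        linarith
      · by_cases h3 : (i:ℕ) < (j:ℕ)
        · -- i + j > 2*m
          rw [if_neg (fun hcon => by have := hmem1.mp hcon; omega),
            if_pos (hmem2.mpr (by omega))]
          have hs := hsy (rv j) (rv i)
          have e1 : rv (rv i) = i := Fin.ext (by simp; omega)
          have e2 : rv (rv j) = j := Fin.ext (by simp; omega)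
          rw [e1, e2] at hs
          linarith
        · rw [if_neg (fun hcon => by have := hmem1.mp hcon; omega),
            if_neg (fun hcon => by have := hmem2.mp hcon; omega)]
          have : (y : Matrix (Fin (2*m+1)) (Fin (2*m+1)) ℝ) i j = 0 :=
            hup i j (by rw [Fin.le_def]; omega)
          rw [this]; ring
  conv_lhs => rw [hdec]
  rw [map_sum]
  refine Finset.sum_eq_zero fun p hp => ?_
  obtain ⟨hplt, hpsum⟩ := (Finset.mem_filter.mp hp).2
  rw [_root_.map_smul, hbase (p.1:ℕ) (p.2:ℕ) hplt hpsum]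
  simp

end SoOddAux

/-- For `n ≥ 3`, the nilradical of the minimal parabolic subalgebra of `so(n, n+1)` (split form
of `so(2n+1, ℂ)`) is nilpotent, has `E_∞^{0,2} = 0`, and no trivial extension of it admits a
symplectic structure. -/
theorem soOdd_nilradical_E02_eq_zero_and_no_symplectic (n : ℕ) (hn : 3 ≤ n) :
    LieRing.IsNilpotent (nilradOf (soOddS n)) ∧
    (∀ j : ℕ,
      LieModule.lowerCentralSeries ℝ (nilradOf (soOddS n)) (nilradOf (soOddS n)) j ≠ ⊥ →
      LieModule.lowerCentralSeries ℝ (nilradOf (soOddS n)) (nilradOf (soOddS n)) (j + 1) = ⊥ →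
      ∀ ω : (nilradOf (soOddS n)) →ₗ[ℝ] (nilradOf (soOddS n)) →ₗ[ℝ] ℝ,
        (∀ x : nilradOf (soOddS n), ω x x = 0) → IsClosed2Form ω →
        ∀ x ∈ LieModule.lowerCentralSeries ℝ (nilradOf (soOddS n)) (nilradOf (soOddS n)) j,
          ∀ y : nilradOf (soOddS n), ω x y = 0) ∧
    (∀ s : ℕ, ¬ ∃ ω : ((Fin s → ℝ) × nilradOf (soOddS n)) →ₗ[ℝ]
        ((Fin s → ℝ) × nilradOf (soOddS n)) →ₗ[ℝ] ℝ, IsSymplecticForm ω) := by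
  refine ⟨LieModule.IsNilpotent.mk _ (SoOddAux.lcs_top_eq_bot n hn), ?_, ?_⟩
  · intro j hne hsucc ω halt hcl x hx y
    have hFmem := SoOddAux.gE_mem_lcs n hn (2*n-2) (le_refl _)
    have hidx : 2*n-2+1 = 2*n-1 := by omega
    rw [hidx] at hFmem
    have hbot := SoOddAux.lcs_top_eq_bot n hn
    have hj : j = 2*n-2 := by
      by_contra hj
      rcases Nat.lt_or_ge j (2*n-2) with h | h
      · have hle := LieModule.antitone_lowerCentralSeries ℝ (nilradOf (soOddS n))
          (nilradOf (soOddS n)) (show j+1 ≤ 2*n-2 by omega)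
        have hmem := hle hFmem
        rw [hsucc] at hmem
        exact SoOddAux.gE_F_ne_zero n hn ((LieSubmodule.mem_bot _).mp hmem)
      · have hle := LieModule.antitone_lowerCentralSeries ℝ (nilradOf (soOddS n))
          (nilradOf (soOddS n)) (show 2*n-1 ≤ j by omega)
        rw [hbot] at hle
        exact hne (le_bot_iff.mp hle)
    subst hj
    have hchar := SoOddAux.lcs_char n hn hx ⟨0, by omega⟩ ⟨2*n-1, by omega⟩ rfl rfl
    rw [hchar, _root_.map_smul, LinearMap.smul_apply,
      SoOddAux.main_vanish n hn ω halt hcl y, smul_zero]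
  · rintro s ⟨ω, halt, hcl, hnd⟩
    have hzne : ((0, SoOddAux.gE n 0 (2*n-1)) : (Fin s → ℝ) × nilradOf (soOddS n)) ≠ 0 := by
      intro h
      exact SoOddAux.gE_F_ne_zero n hn (congrArg Prod.snd h)
    obtain ⟨w, hw⟩ := hnd _ hzne
    apply hw
    have hw1 : ω ((0, SoOddAux.gE n 0 (2*n-1)) : (Fin s → ℝ) × nilradOf (soOddS n))
        ((w.1, 0) : (Fin s → ℝ) × nilradOf (soOddS n)) = 0 := by
      have hab : ⁅SoOddAux.gm n 0 2, SoOddAux.gm n 2 (2*n-1)⁆ = SoOddAux.gm n 0 (2*n-1) :=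
        SoOddAux.gm_lie_chain n (by omega) (by omega) (by omega) (by omega) (by omega) (by omega)
      have habE : ⁅SoOddAux.gE n 0 2, SoOddAux.gE n 2 (2*n-1)⁆ = SoOddAux.gE n 0 (2*n-1) :=
        SoOddAux.lie_gE_eq (by omega) (by omega) (by omega) (by omega) (by omega) (by omega) hab
      have hzbr : ⁅((0, SoOddAux.gE n 0 2) : (Fin s → ℝ) × nilradOf (soOddS n)),
          ((0, SoOddAux.gE n 2 (2*n-1)) : (Fin s → ℝ) × nilradOf (soOddS n))⁆
          = ((0, SoOddAux.gE n 0 (2*n-1)) : (Fin s → ℝ) × nilradOf (soOddS n)) := by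
        show ((⁅(0 : Fin s → ℝ), (0 : Fin s → ℝ)⁆ : Fin s → ℝ),
          ⁅SoOddAux.gE n 0 2, SoOddAux.gE n 2 (2*n-1)⁆)
          = ((0, SoOddAux.gE n 0 (2*n-1)) : (Fin s → ℝ) × nilradOf (soOddS n))
        rw [habE, lie_zero]
      have h2 : ⁅((0, SoOddAux.gE n 2 (2*n-1)) : (Fin s → ℝ) × nilradOf (soOddS n)),
          ((w.1, 0) : (Fin s → ℝ) × nilradOf (soOddS n))⁆ = 0 := by
        show ((⁅(0 : Fin s → ℝ), w.1⁆ : Fin s → ℝ),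
          ⁅SoOddAux.gE n 2 (2*n-1), (0 : nilradOf (soOddS n))⁆) = 0
        rw [zero_lie, lie_zero]
        rfl
      have h3 : ⁅((w.1, 0) : (Fin s → ℝ) × nilradOf (soOddS n)),
          ((0, SoOddAux.gE n 0 2) : (Fin s → ℝ) × nilradOf (soOddS n))⁆ = 0 := by
        show ((⁅w.1, (0 : Fin s → ℝ)⁆ : Fin s → ℝ),
          ⁅(0 : nilradOf (soOddS n)), SoOddAux.gE n 0 2⁆) = 0
        rw [lie_zero, zero_lie]
        rfl
      have hc := hcl ((0, SoOddAux.gE n 0 2)) ((0, SoOddAux.gE n 2 (2*n-1))) ((w.1, 0))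
      rw [hzbr, h2, h3] at hc
      simpa using hc
    have hw2 : ω ((0, SoOddAux.gE n 0 (2*n-1)) : (Fin s → ℝ) × nilradOf (soOddS n))
        ((0, w.2) : (Fin s → ℝ) × nilradOf (soOddS n)) = 0 := by
      let inr : nilradOf (soOddS n) →ₗ[ℝ] (Fin s → ℝ) × nilradOf (soOddS n) :=
        LinearMap.inr ℝ _ _
      let ω' : nilradOf (soOddS n) →ₗ[ℝ] nilradOf (soOddS n) →ₗ[ℝ] ℝ := (ω.comp inr).compl₂ inr
      have hω'app : ∀ a b, ω' a b = ω ((0, a) : (Fin s → ℝ) × nilradOf (soOddS n))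
          ((0, b) : (Fin s → ℝ) × nilradOf (soOddS n)) := fun a b => rfl
      have halt' : ∀ x, ω' x x = 0 := fun x => halt _
      have hcl' : IsClosed2Form ω' := by
        intro a b c
        have hbr : ∀ u v : nilradOf (soOddS n),
            ⁅((0, u) : (Fin s → ℝ) × nilradOf (soOddS n)),
              ((0, v) : (Fin s → ℝ) × nilradOf (soOddS n))⁆
            = ((0, ⁅u, v⁆) : (Fin s → ℝ) × nilradOf (soOddS n)) := by
          intro u v
          show ((⁅(0 : Fin s → ℝ), (0 : Fin s → ℝ)⁆ : Fin s → ℝ), ⁅u, v⁆)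
            = ((0, ⁅u, v⁆) : (Fin s → ℝ) × nilradOf (soOddS n))
          rw [lie_zero]
        have hc := hcl (0, a) (0, b) (0, c)
        rw [hbr, hbr, hbr] at hc
        simp only [hω'app]
        exact hc
      have hmain := SoOddAux.main_vanish n hn ω' halt' hcl' w.2
      rw [hω'app] at hmain
      exact hmain
    have hwsplit : w = ((w.1, 0) : (Fin s → ℝ) × nilradOf (soOddS n))
        + ((0, w.2) : (Fin s → ℝ) × nilradOf (soOddS n)) := by
      ext <;> simp
    rw [hwsplit, map_add, hw1, hw2, add_zero]
end

section
/- Let 𝔥 be the real Lie algebra of strictly upper triangular 3×3 real matrices (the 3-dimensional Heisenberg Lie algebra, the nilradical of the Borel subalgebra of sl(3,ℝ)). Then the product Lie algebra ℝ × 𝔥 (with ℝ abelian) admits a symplectic structure. -/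
set_option synthInstance.maxHeartbeats 1000000

attribute [local instance 100] LieRing.ofAssociativeRing

lemma strictUpper_coe_smul_s12 (c : ℝ) (a : strictUpper 3) (i j : Fin 3) :
    ((c • a : strictUpper 3) : Matrix (Fin 3) (Fin 3) ℝ) i j =
      c * (a : Matrix (Fin 3) (Fin 3) ℝ) i j := rfl

/-- The trivial extension `ℝ × 𝔥` of the 3-dimensional Heisenberg Lie algebra `𝔥` (strictly
upper triangular `3 × 3` real matrices) admits a symplectic structure. -/
theorem heisenberg_extension_symplectic :
    ∃ ω : (ℝ × strictUpper 3) →ₗ[ℝ] (ℝ × strictUpper 3) →ₗ[ℝ] ℝ,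
      IsSymplecticForm ω := by
  refine ⟨LinearMap.mk₂ ℝ (fun x y =>
      (x.2 : Matrix (Fin 3) (Fin 3) ℝ) 0 1 * (y.2 : Matrix (Fin 3) (Fin 3) ℝ) 0 2
      - (x.2 : Matrix (Fin 3) (Fin 3) ℝ) 0 2 * (y.2 : Matrix (Fin 3) (Fin 3) ℝ) 0 1
      + (x.2 : Matrix (Fin 3) (Fin 3) ℝ) 1 2 * y.1
      - x.1 * (y.2 : Matrix (Fin 3) (Fin 3) ℝ) 1 2)
    (by intro m n p; simp [Matrix.add_apply]; ring)
    (by intro c m n; simp only [Prod.smul_fst, Prod.smul_snd, smul_eq_mul, strictUpper_coe_smul_s12]; ring)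
    (by intro m n p; simp [Matrix.add_apply]; ring)
    (by intro c m n; simp only [Prod.smul_fst, Prod.smul_snd, smul_eq_mul, strictUpper_coe_smul_s12]; ring), ?_, ?_, ?_⟩
  · intro x; simp; ring
  · intro x y z
    have key : ∀ (a b : strictUpper 3) (i j : Fin 3),
        ((⁅a, b⁆ : strictUpper 3) : Matrix (Fin 3) (Fin 3) ℝ) i j =
        ((a : Matrix (Fin 3) (Fin 3) ℝ) * b) i j - ((b : Matrix (Fin 3) (Fin 3) ℝ) * a) i j := by
      intro a b i j
      rw [LieSubalgebra.coe_bracket, Ring.lie_def, Matrix.sub_apply]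
    have hmem : ∀ (a : strictUpper 3) (i j : Fin 3), j ≤ i →
        (a : Matrix (Fin 3) (Fin 3) ℝ) i j = 0 := fun a => a.2
    simp only [LinearMap.mk₂_apply]
    have hb : ∀ p q : ℝ × strictUpper 3, ⁅p, q⁆.2 = ⁅p.2, q.2⁆ := fun _ _ => rfl
    have hb1 : ∀ p q : ℝ × strictUpper 3, ⁅p, q⁆.1 = 0 := by
      intro p q
      show ⁅p.1, q.1⁆ = 0
      simp [Ring.lie_def, mul_comm]
    rw [hb, hb, hb, hb1, hb1, hb1]
    rw [key, key, key, key, key, key, key, key, key]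
    simp only [Matrix.mul_apply, Fin.sum_univ_three,
      hmem x.2 0 0 le_rfl, hmem x.2 1 1 le_rfl, hmem x.2 2 2 le_rfl,
      hmem x.2 1 0 (by decide), hmem x.2 2 0 (by decide), hmem x.2 2 1 (by decide),
      hmem y.2 0 0 le_rfl, hmem y.2 1 1 le_rfl, hmem y.2 2 2 le_rfl,
      hmem y.2 1 0 (by decide), hmem y.2 2 0 (by decide), hmem y.2 2 1 (by decide),
      hmem z.2 0 0 le_rfl, hmem z.2 1 1 le_rfl, hmem z.2 2 2 le_rfl,
      hmem z.2 1 0 (by decide), hmem z.2 2 0 (by decide), hmem z.2 2 1 (by decide)]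
    ring
  · intro x hx
    have hmem : ∀ (a : strictUpper 3) (i j : Fin 3), j ≤ i →
        (a : Matrix (Fin 3) (Fin 3) ℝ) i j = 0 := fun a => a.2
    -- auxiliary elements of strictUpper 3
    have m01 : (Matrix.single 0 1 (1:ℝ)) ∈ strictUpper 3 := by
      intro i j h
      fin_cases i <;> fin_cases j <;> simp_all [Matrix.single]
    have m12 : (Matrix.single 1 2 (1:ℝ)) ∈ strictUpper 3 := by
      intro i j h
      fin_cases i <;> fin_cases j <;> simp_all [Matrix.single]
    have m02 : (Matrix.single 0 2 (1:ℝ)) ∈ strictUpper 3 := by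
      intro i j h
      fin_cases i <;> fin_cases j <;> simp_all [Matrix.single]
    by_cases h01 : (x.2 : Matrix (Fin 3) (Fin 3) ℝ) 0 1 ≠ 0
    · exact ⟨(0, ⟨Matrix.single 0 2 1, m02⟩), by
        simp [Matrix.single, h01]⟩
    push_neg at h01
    by_cases h02 : (x.2 : Matrix (Fin 3) (Fin 3) ℝ) 0 2 ≠ 0
    · refine ⟨(0, ⟨Matrix.single 0 1 1, m01⟩), ?_⟩
      simp [Matrix.single, h02]
    push_neg at h02
    by_cases h12 : (x.2 : Matrix (Fin 3) (Fin 3) ℝ) 1 2 ≠ 0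
    · exact ⟨(1, 0), by simp [h12]⟩
    push_neg at h12
    by_cases h1 : x.1 ≠ 0
    · exact ⟨(0, ⟨Matrix.single 1 2 1, m12⟩), by
        simp [Matrix.single, h1]⟩
    push_neg at h1
    exfalso
    apply hx
    ext
    · exact h1
    next i j =>
      fin_cases i <;> fin_cases j
      · exact hmem x.2 0 0 le_rfl
      · exact h01
      · exact h02
      · exact hmem x.2 1 0 (by decide)
      · exact hmem x.2 1 1 le_rfl
      · exact h12
      · exact hmem x.2 2 0 (by decide)
      · exact hmem x.2 2 1 (by decide)
      · exact hmem x.2 2 2 le_rfl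
end

section
/- There is a Lie algebra structure on ℝ⁴ whose bracket on the standard basis e₁, e₂, e₃, e₄ is determined by [e₁,e₂] = e₃, [e₁,e₃] = e₄, with all other brackets of basis vectors equal to zero. This 4-dimensional 3-step nilpotent Lie algebra (the nilradical of the minimal parabolic subalgebra of the split form of so(5,ℂ)) admits a symplectic structure. -/
/-- The standard basis vector `eᵢ` of `ℝ⁴`. -/
noncomputable def e4 (i : Fin 4) : Fin 4 → ℝ := Pi.single i 1

noncomputable def Bmap : (Fin 4 → ℝ) →ₗ[ℝ] (Fin 4 → ℝ) →ₗ[ℝ] (Fin 4 → ℝ) :=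
  LinearMap.mk₂ ℝ
    (fun x y => ![0, 0, x 0 * y 1 - x 1 * y 0, x 0 * y 2 - x 2 * y 0])
    (by intro x x' y; funext i; fin_cases i <;> simp <;> ring)
    (by intro c x y; funext i; fin_cases i <;> simp <;> ring)
    (by intro x y y'; funext i; fin_cases i <;> simp <;> ring)
    (by intro c x y; funext i; fin_cases i <;> simp <;> ring)

noncomputable def wmap : (Fin 4 → ℝ) →ₗ[ℝ] (Fin 4 → ℝ) →ₗ[ℝ] ℝ :=
  LinearMap.mk₂ ℝ
    (fun x y => x 0 * y 3 - x 3 * y 0 + x 1 * y 2 - x 2 * y 1)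
    (by intro x x' y; simp; ring)
    (by intro c x y; simp; ring)
    (by intro x y y'; simp; ring)
    (by intro c x y; simp; ring)

/-- There is a Lie algebra structure on `ℝ⁴` with `⁅e₁, e₂⁆ = e₃`, `⁅e₁, e₃⁆ = e₄` and all
other brackets of basis vectors zero (the nilradical of the minimal parabolic subalgebra of the
split form of `so(5, ℂ)`), and it admits a symplectic structure. -/
theorem dim4_nilradical_symplectic :
    ∃ B : (Fin 4 → ℝ) →ₗ[ℝ] (Fin 4 → ℝ) →ₗ[ℝ] (Fin 4 → ℝ),
      -- B is a Lie bracket: alternating and satisfying the Jacobi (Leibniz) identity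
      (∀ x : Fin 4 → ℝ, B x x = 0) ∧
      (∀ x y z : Fin 4 → ℝ, B x (B y z) = B (B x y) z + B y (B x z)) ∧
      -- the structure constants: [e₁,e₂] = e₃, [e₁,e₃] = e₄, all other brackets zero
      B (e4 0) (e4 1) = e4 2 ∧
      B (e4 0) (e4 2) = e4 3 ∧
      (∀ i j : Fin 4, ¬((i = 0 ∧ j = 1) ∨ (i = 1 ∧ j = 0) ∨ (i = 0 ∧ j = 2) ∨
          (i = 2 ∧ j = 0)) → B (e4 i) (e4 j) = 0) ∧
      -- it admits a symplectic structure
      ∃ ω : (Fin 4 → ℝ) →ₗ[ℝ] (Fin 4 → ℝ) →ₗ[ℝ] ℝ,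
        (∀ x : Fin 4 → ℝ, ω x x = 0) ∧
        (∀ x y z : Fin 4 → ℝ, ω (B x y) z + ω (B y z) x + ω (B z x) y = 0) ∧
        (∀ x : Fin 4 → ℝ, x ≠ 0 → ∃ y : Fin 4 → ℝ, ω x y ≠ 0) := by
  refine ⟨Bmap, ?_, ?_, ?_, ?_, ?_, wmap, ?_, ?_, ?_⟩
  · intro x; funext i; fin_cases i <;> simp [Bmap] <;> ring
  · intro x y z; funext i; fin_cases i <;> simp [Bmap] <;> ring
  · funext i; fin_cases i <;> simp [Bmap, e4, Pi.single_apply]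
  · funext i; fin_cases i <;> simp [Bmap, e4, Pi.single_apply]
  · intro i j h; funext k
    fin_cases i <;> fin_cases j <;> simp_all <;>
      fin_cases k <;> simp [Bmap, e4, Pi.single_apply]
  · intro x; simp [wmap]; ring
  · intro x y z; simp [Bmap, wmap]; ring
  · intro x hx
    refine ⟨![-x 3, -x 2, x 1, x 0], fun h => hx ?_⟩
    simp [wmap] at h
    have h' : x 0 ^ 2 + x 1 ^ 2 + x 2 ^ 2 + x 3 ^ 2 = 0 := by rw [← h]; ring
    have h0 : x 0 = 0 := by
      have : x 0 ^ 2 = 0 := by linarith [sq_nonneg (x 1), sq_nonneg (x 2), sq_nonneg (x 3), sq_nonneg (x 0)]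
      exact pow_eq_zero_iff two_ne_zero |>.mp this
    have h1 : x 1 = 0 := by
      have : x 1 ^ 2 = 0 := by linarith [sq_nonneg (x 1), sq_nonneg (x 2), sq_nonneg (x 3), sq_nonneg (x 0)]
      exact pow_eq_zero_iff two_ne_zero |>.mp this
    have h2 : x 2 = 0 := by
      have : x 2 ^ 2 = 0 := by linarith [sq_nonneg (x 1), sq_nonneg (x 2), sq_nonneg (x 3), sq_nonneg (x 0)]
      exact pow_eq_zero_iff two_ne_zero |>.mp this
    have h3 : x 3 = 0 := by
      have : x 3 ^ 2 = 0 := by linarith [sq_nonneg (x 1), sq_nonneg (x 2), sq_nonneg (x 3), sq_nonneg (x 0)]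
      exact pow_eq_zero_iff two_ne_zero |>.mp this
    funext k; fin_cases k <;> simp [h0, h1, h2, h3]
end

section
/- Let m ≥ 2 and let 𝔫_{m,3} be the free 3-step nilpotent real Lie algebra on m generators, i.e. the quotient of the free Lie algebra over ℝ on m generators by the ideal 𝔣^3 (the third term of its lower central series). Then 𝔫_{m,3} is 3-step nilpotent and E_∞^{0,2}(𝔫_{m,3}) ≠ 0: there exist a closed 2-form ω on 𝔫_{m,3}, an element x ∈ (𝔫_{m,3})², and an element y with ω(x,y) ≠ 0. -/
/-- The free 3-step nilpotent real Lie algebra on `m` generators: the quotient of the free Lie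
algebra by the third term of its lower central series. -/
abbrev freeNilpotent3 (m : ℕ) :=
  FreeLieAlgebra ℝ (Fin m) ⧸
    (LieModule.lowerCentralSeries ℝ (FreeLieAlgebra ℝ (Fin m)) (FreeLieAlgebra ℝ (Fin m)) 3 :
      LieIdeal ℝ (FreeLieAlgebra ℝ (Fin m)))

attribute [local instance] LieRing.ofAssociativeRing

namespace FreeNilp3Aux
noncomputable section

abbrev A5 := Matrix (Fin 5) (Fin 5) ℝ

/-- matrices vanishing within distance `k` of the diagonal (and below). -/
def Nsub (k : ℕ) : Submodule ℝ A5 where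
  carrier := {X | ∀ i j : Fin 5, (j : ℕ) < (i : ℕ) + k → X i j = 0}
  add_mem' hx hy i j h := by simp [Matrix.add_apply, hx i j h, hy i j h]
  zero_mem' i j h := rfl
  smul_mem' c X hX i j h := by simp [Matrix.smul_apply, hX i j h]

lemma Nsub_anti {k k' : ℕ} (h : k ≤ k') : Nsub k' ≤ Nsub k := by
  intro X hX i j hij
  exact hX i j (by omega)

lemma lie_mem_Nsub {p q : ℕ} {X Y : A5} (hX : X ∈ Nsub p) (hY : Y ∈ Nsub q) :
    ⁅X, Y⁆ ∈ Nsub (p + q) := by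
  intro i j hij
  rw [Ring.lie_def]
  have h1 : (X * Y) i j = 0 := by
    rw [Matrix.mul_apply]
    refine Finset.sum_eq_zero fun l _ => ?_
    by_cases hl : (l : ℕ) < (i : ℕ) + p
    · rw [hX i l hl, zero_mul]
    · rw [hY l j (by omega), mul_zero]
  have h2 : (Y * X) i j = 0 := by
    rw [Matrix.mul_apply]
    refine Finset.sum_eq_zero fun l _ => ?_
    by_cases hl : (l : ℕ) < (i : ℕ) + q
    · rw [hY i l hl, zero_mul]
    · rw [hX l j (by omega), mul_zero]
  simp [Matrix.sub_apply, h1, h2]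

/-- strictly upper triangular 5×5 matrices, as a Lie subalgebra. -/
def L5 : LieSubalgebra ℝ A5 :=
  { Nsub 1 with
    lie_mem' := fun hx hy => Nsub_anti (by norm_num) (lie_mem_Nsub hx hy) }

def aM : A5 := !![0,1,0,0,0; 0,0,0,0,0; 0,0,0,1,0; 0,0,0,0,0; 0,0,0,0,0]
def bM : A5 := !![0,0,0,0,0; 0,0,1,0,0; 0,0,0,0,0; 0,0,0,0,1; 0,0,0,0,0]

lemma aM_mem : aM ∈ Nsub 1 := by
  intro i j h
  fin_cases i <;> fin_cases j <;> simp_all [aM, Matrix.vecHead, Matrix.vecTail]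

lemma bM_mem : bM ∈ Nsub 1 := by
  intro i j h
  fin_cases i <;> fin_cases j <;> simp_all [bM, Matrix.vecHead, Matrix.vecTail]

def aL : L5 := ⟨aM, aM_mem⟩
def bL : L5 := ⟨bM, bM_mem⟩

variable (m : ℕ)

abbrev Free := FreeLieAlgebra ℝ (Fin m)

def g : Fin m → L5 := fun i => if (i : ℕ) = 0 then aL else if (i : ℕ) = 1 then bL else 0

def φ : Free m →ₗ⁅ℝ⁆ L5 := FreeLieAlgebra.lift ℝ (g m)

def ψ : Free m →ₗ⁅ℝ⁆ A5 := L5.incl.comp (φ m)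

lemma ψ_mem (x : Free m) : ψ m x ∈ Nsub 1 := (φ m x).2

/-- preimage filtration -/
def Mk (k : ℕ) : LieIdeal ℝ (Free m) :=
  { (Nsub (k + 1)).comap (ψ m).toLinearMap with
    lie_mem := by
      intro x y hy
      have : ψ m ⁅x, y⁆ ∈ Nsub (1 + (k + 1)) := by
        rw [LieHom.map_lie]
        exact lie_mem_Nsub (ψ_mem m x) hy
      exact Nsub_anti (by omega) this }

lemma mem_Mk {k : ℕ} {x : Free m} : x ∈ Mk m k ↔ ψ m x ∈ Nsub (k + 1) := Iff.rfl

lemma lcs_le_Mk (k : ℕ) :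
    LieModule.lowerCentralSeries ℝ (Free m) (Free m) k ≤ Mk m k := by
  induction k with
  | zero => intro x _; exact ψ_mem m x
  | succ k ih =>
    rw [LieModule.lowerCentralSeries_succ]
    rw [LieSubmodule.lie_le_iff]
    intro x _ y hy
    have hy' : ψ m y ∈ Nsub (k + 1) := ih hy
    show ψ m ⁅x, y⁆ ∈ Nsub (k + 2)
    have : ψ m ⁅x, y⁆ ∈ Nsub (1 + (k + 1)) := by
      rw [LieHom.map_lie]
      exact lie_mem_Nsub (ψ_mem m x) hy'
    exact Nsub_anti (by omega) this

/-- the ideal we quotient by -/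
abbrev I3 : LieIdeal ℝ (Free m) :=
  LieModule.lowerCentralSeries ℝ (Free m) (Free m) 3

lemma ψ_I3 {x : Free m} (hx : x ∈ I3 m) : ψ m x ∈ Nsub 4 := lcs_le_Mk m 3 hx

/-- the pre-2-form on the free Lie algebra -/
def ω₀ : Free m →ₗ[ℝ] Free m →ₗ[ℝ] ℝ :=
  LinearMap.mk₂ ℝ (fun x y => ⁅ψ m x, ψ m y⁆ 0 4)
    (fun x x' y => by simp [add_lie, Matrix.add_apply])
    (fun c x y => by simp [smul_lie, Matrix.smul_apply])
    (fun x y y' => by simp [lie_add, Matrix.add_apply])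
    (fun c x y => by simp [lie_smul, Matrix.smul_apply])

lemma ω₀_apply (x y : Free m) : ω₀ m x y = ⁅ψ m x, ψ m y⁆ 0 4 := rfl

lemma ω₀_left_vanish {x : Free m} (hx : x ∈ I3 m) (y : Free m) : ω₀ m x y = 0 := by
  rw [ω₀_apply]
  exact lie_mem_Nsub (ψ_I3 m hx) (ψ_mem m y) 0 4 (by norm_num)

lemma ω₀_right_vanish (x : Free m) {y : Free m} (hy : y ∈ I3 m) : ω₀ m x y = 0 := by
  rw [ω₀_apply]
  exact lie_mem_Nsub (ψ_mem m x) (ψ_I3 m hy) 0 4 (by norm_num)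

lemma jac5 (X Y Z : A5) : ⁅⁅X, Y⁆, Z⁆ + ⁅⁅Y, Z⁆, X⁆ + ⁅⁅Z, X⁆, Y⁆ = 0 := by
  simp only [Ring.lie_def]
  noncomm_ring

/-- the quotient map as a morphism of Lie algebras -/
def mkHom : Free m →ₗ⁅ℝ⁆ freeNilpotent3 m :=
  { (I3 m).toSubmodule.mkQ with map_lie' := fun {x y} => rfl }

lemma mkHom_apply (x : Free m) : mkHom m x = Submodule.Quotient.mk x := rfl

lemma mkHom_surj : Function.Surjective (mkHom m) := by
  intro q
  obtain ⟨y, rfl⟩ := Submodule.Quotient.mk_surjective (I3 m).toSubmodule q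
  exact ⟨y, rfl⟩

def ω₁ : Free m →ₗ[ℝ] (freeNilpotent3 m →ₗ[ℝ] ℝ) where
  toFun x := Submodule.liftQ (I3 m).toSubmodule (ω₀ m x)
    (fun y hy => LinearMap.mem_ker.mpr (ω₀_right_vanish m x hy))
  map_add' x x' := by
    apply LinearMap.ext
    intro q
    obtain ⟨y, rfl⟩ := Submodule.Quotient.mk_surjective (I3 m).toSubmodule q
    simp
  map_smul' c x := by
    apply LinearMap.ext
    intro q
    obtain ⟨y, rfl⟩ := Submodule.Quotient.mk_surjective (I3 m).toSubmodule q
    change (ω₀ m (c • x)) y = c • ((ω₀ m) x y)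
    rw [map_smul]
    rfl

def ωQ : freeNilpotent3 m →ₗ[ℝ] freeNilpotent3 m →ₗ[ℝ] ℝ :=
  Submodule.liftQ (I3 m).toSubmodule (ω₁ m) (by
    intro x hx
    rw [LinearMap.mem_ker]
    apply LinearMap.ext
    intro q
    obtain ⟨y, rfl⟩ := Submodule.Quotient.mk_surjective (I3 m).toSubmodule q
    exact ω₀_left_vanish m hx y)

lemma ωQ_mk (x y : Free m) : ωQ m (mkHom m x) (mkHom m y) = ω₀ m x y := rfl

lemma ψ_of (i : Fin m) : ψ m (FreeLieAlgebra.of ℝ i) = (g m i : A5) := by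
  rw [ψ, LieHom.comp_apply, φ, FreeLieAlgebra.lift_of_apply]
  rfl

end
end FreeNilp3Aux

open FreeNilp3Aux

/-- For `m ≥ 2`, the free 3-step nilpotent Lie algebra `𝔫_{m,3}` on `m` generators is 3-step
nilpotent and has `E_∞^{0,2}(𝔫_{m,3}) ≠ 0`: some closed 2-form does not vanish on
`(𝔫_{m,3})² × 𝔫_{m,3}`. -/
theorem freeNilpotent3_E02_ne_zero (m : ℕ) (hm : 2 ≤ m) :
    (LieModule.lowerCentralSeries ℝ (freeNilpotent3 m) (freeNilpotent3 m) 3 = ⊥ ∧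
     LieModule.lowerCentralSeries ℝ (freeNilpotent3 m) (freeNilpotent3 m) 2 ≠ ⊥) ∧
    ∃ ω : (freeNilpotent3 m) →ₗ[ℝ] (freeNilpotent3 m) →ₗ[ℝ] ℝ,
      (∀ x : freeNilpotent3 m, ω x x = 0) ∧
      (∀ x y z : freeNilpotent3 m, ω ⁅x, y⁆ z + ω ⁅y, z⁆ x + ω ⁅z, x⁆ y = 0) ∧
      ∃ x ∈ LieModule.lowerCentralSeries ℝ (freeNilpotent3 m) (freeNilpotent3 m) 2,
        ∃ y : freeNilpotent3 m, ω x y ≠ 0 := by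
  classical
  set e0 : FreeLieAlgebra ℝ (Fin m) := FreeLieAlgebra.of ℝ (⟨0, by omega⟩ : Fin m) with he0
  set e1 : FreeLieAlgebra ℝ (Fin m) := FreeLieAlgebra.of ℝ (⟨1, by omega⟩ : Fin m) with he1
  have hψ0 : ψ m e0 = aM := by
    rw [he0, ψ_of]
    simp [g, aL]
  have hψ1 : ψ m e1 = bM := by
    rw [he1, ψ_of]
    simp [g, bL]
  have hψw : ψ m ⁅e0, ⁅e0, e1⁆⁆ = ⁅aM, ⁅aM, bM⁆⁆ := by
    rw [LieHom.map_lie, LieHom.map_lie, hψ0, hψ1]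
  have hne : ω₀ m ⁅e0, ⁅e0, e1⁆⁆ e1 ≠ 0 := by
    rw [ω₀_apply, hψw, hψ1]
    simp [Ring.lie_def, aM, bM, Matrix.sub_apply, Matrix.mul_apply, Fin.sum_univ_succ]
    norm_num
  have hw2 : ⁅e0, ⁅e0, e1⁆⁆ ∈
      LieModule.lowerCentralSeries ℝ (FreeLieAlgebra ℝ (Fin m)) (FreeLieAlgebra ℝ (Fin m)) 2 := by
    rw [show (2 : ℕ) = 1 + 1 from rfl, LieModule.lowerCentralSeries_succ,
      LieModule.lowerCentralSeries_succ, LieModule.lowerCentralSeries_zero]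
    exact LieSubmodule.lie_mem_lie (LieSubmodule.mem_top _)
      (LieSubmodule.lie_mem_lie (LieSubmodule.mem_top _) (LieSubmodule.mem_top _))
  have hmapped : mkHom m ⁅e0, ⁅e0, e1⁆⁆ ∈
      LieModule.lowerCentralSeries ℝ (freeNilpotent3 m) (freeNilpotent3 m) 2 := by
    rw [← LieIdeal.lowerCentralSeries_map_eq 2 (mkHom_surj m)]
    exact LieIdeal.mem_map hw2
  refine ⟨⟨?_, ?_⟩, ωQ m, ?_, ?_, mkHom m ⁅e0, ⁅e0, e1⁆⁆, hmapped, mkHom m e1,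
    by rw [ωQ_mk]; exact hne⟩
  · rw [← LieIdeal.lowerCentralSeries_map_eq 3 (mkHom_surj m), LieIdeal.map_eq_bot_iff]
    intro x hx
    rw [LieHom.mem_ker, mkHom_apply, Submodule.Quotient.mk_eq_zero]
    exact hx
  · intro hbot
    rw [hbot, LieSubmodule.mem_bot] at hmapped
    apply hne
    rw [← ωQ_mk m _ e1, hmapped, map_zero, LinearMap.zero_apply]
  · intro x
    obtain ⟨x', rfl⟩ := mkHom_surj m x
    rw [ωQ_mk, ω₀_apply, lie_self]
    rfl
  · intro x y z
    obtain ⟨x', rfl⟩ := mkHom_surj m x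
    obtain ⟨y', rfl⟩ := mkHom_surj m y
    obtain ⟨z', rfl⟩ := mkHom_surj m z
    rw [← LieHom.map_lie, ← LieHom.map_lie, ← LieHom.map_lie, ωQ_mk, ωQ_mk, ωQ_mk,
      ω₀_apply, ω₀_apply, ω₀_apply, LieHom.map_lie, LieHom.map_lie, LieHom.map_lie,
      ← Matrix.add_apply, ← Matrix.add_apply, jac5, Matrix.zero_apply]
end

section
/- Let 𝔫 be the 6-dimensional real nilpotent Lie algebra with basis e₁,…,e₆ and nonzero brackets [e₁,e₂] = e₄, [e₁,e₃] = e₅, [e₁,e₄] = e₆ (all other brackets of basis vectors zero), and let e¹,…,e⁶ be the dual basis. Then the 2-forms ω₁ = e¹∧e⁶ − e²∧e⁴ + e³∧e⁵ and ω₂ = e¹∧e⁶ + e²∧e⁵ + e³∧e⁴ are both symplectic structures on 𝔫, and there is no Lie algebra automorphism A of 𝔫 such that the 2-form (x,y) ↦ ω₁(Ax, Ay) − ω₂(x,y) is exact, i.e. of the shape (x,y) ↦ f([x,y]) for a linear functional f on 𝔫. -/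
/-- The standard basis vector `eᵢ` of `ℝ⁶`. -/
noncomputable def e6 (i : Fin 6) : Fin 6 → ℝ := Pi.single i 1

/-- The 2-form `ω₁ = e¹∧e⁶ − e²∧e⁴ + e³∧e⁵` (0-indexed coordinates). -/
def w1 (x y : Fin 6 → ℝ) : ℝ :=
  (x 0 * y 5 - x 5 * y 0) - (x 1 * y 3 - x 3 * y 1) + (x 2 * y 4 - x 4 * y 2)

/-- The 2-form `ω₂ = e¹∧e⁶ + e²∧e⁵ + e³∧e⁴` (0-indexed coordinates). -/
def w2 (x y : Fin 6 → ℝ) : ℝ :=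
  (x 0 * y 5 - x 5 * y 0) + (x 1 * y 4 - x 4 * y 1) + (x 2 * y 3 - x 3 * y 2)

def Bf (x y : Fin 6 → ℝ) : Fin 6 → ℝ := fun k =>
  if k = 3 then x 0 * y 1 - x 1 * y 0
  else if k = 4 then x 0 * y 2 - x 2 * y 0
  else if k = 5 then x 0 * y 3 - x 3 * y 0
  else 0

noncomputable def LB : (Fin 6 → ℝ) →ₗ[ℝ] (Fin 6 → ℝ) →ₗ[ℝ] (Fin 6 → ℝ) :=
  LinearMap.mk₂ ℝ Bf
    (by intro x x' y; funext k; simp only [Bf, Pi.add_apply]; split_ifs <;> ring)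
    (by intro c x y; funext k; simp only [Bf, Pi.smul_apply, smul_eq_mul]; split_ifs <;> ring)
    (by intro x y y'; funext k; simp only [Bf, Pi.add_apply]; split_ifs <;> ring)
    (by intro c x y; funext k; simp only [Bf, Pi.smul_apply, smul_eq_mul]; split_ifs <;> ring)

lemma LB_apply (x y : Fin 6 → ℝ) : LB x y = Bf x y := rfl

lemma Bf0 (x y : Fin 6 → ℝ) : Bf x y 0 = 0 := rfl
lemma Bf1 (x y : Fin 6 → ℝ) : Bf x y 1 = 0 := rfl
lemma Bf2 (x y : Fin 6 → ℝ) : Bf x y 2 = 0 := rfl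
lemma Bf3 (x y : Fin 6 → ℝ) : Bf x y 3 = x 0 * y 1 - x 1 * y 0 := rfl
lemma Bf4 (x y : Fin 6 → ℝ) : Bf x y 4 = x 0 * y 2 - x 2 * y 0 := rfl
lemma Bf5 (x y : Fin 6 → ℝ) : Bf x y 5 = x 0 * y 3 - x 3 * y 0 := rfl

lemma e6_apply (i j : Fin 6) : e6 i j = if j = i then 1 else 0 := Pi.single_apply i 1 j

lemma LB_alt : ∀ x : Fin 6 → ℝ, LB x x = 0 := by
  intro x; funext k
  simp only [LB_apply, Bf, Pi.zero_apply]; split_ifs <;> ring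

lemma LB_jacobi : ∀ x y z : Fin 6 → ℝ, LB x (LB y z) = LB (LB x y) z + LB y (LB x z) := by
  intro x y z; funext k
  simp only [LB_apply, Pi.add_apply]
  simp [Bf]
  split_ifs <;> ring

lemma LB_e01 : LB (e6 0) (e6 1) = e6 3 := by
  funext k
  simp only [LB_apply]
  simp [Bf, e6_apply] <;> split_ifs <;> simp_all

lemma LB_e02 : LB (e6 0) (e6 2) = e6 4 := by
  funext k
  simp only [LB_apply]
  simp [Bf, e6_apply] <;> rintro rfl <;> decide

lemma LB_e03 : LB (e6 0) (e6 3) = e6 5 := by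
  funext k
  simp only [LB_apply]
  simp [Bf, e6_apply] <;> split_ifs <;> simp_all

lemma Bf_eq_zero (x y : Fin 6 → ℝ) (h3 : x 0 * y 1 - x 1 * y 0 = 0)
    (h4 : x 0 * y 2 - x 2 * y 0 = 0) (h5 : x 0 * y 3 - x 3 * y 0 = 0) : Bf x y = 0 := by
  funext k
  simp only [Bf, Pi.zero_apply]; split_ifs <;> simp_all

lemma LB_struct_zero : ∀ i j : Fin 6,
    ¬((i = 0 ∧ j = 1) ∨ (i = 1 ∧ j = 0) ∨ (i = 0 ∧ j = 2) ∨ (i = 2 ∧ j = 0) ∨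
      (i = 0 ∧ j = 3) ∨ (i = 3 ∧ j = 0)) → LB (e6 i) (e6 j) = 0 := by
  intro i j hij
  rw [LB_apply]
  apply Bf_eq_zero <;> simp only [e6_apply] <;> split_ifs <;> simp_all

lemma w1_closed : ∀ x y z : Fin 6 → ℝ, w1 (LB x y) z + w1 (LB y z) x + w1 (LB z x) y = 0 := by
  intro x y z
  simp only [w1, LB_apply]
  simp [Bf]
  ring

lemma w2_closed : ∀ x y z : Fin 6 → ℝ, w2 (LB x y) z + w2 (LB y z) x + w2 (LB z x) y = 0 := by
  intro x y z
  simp only [w2, LB_apply]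
  simp [Bf]
  ring

lemma w1_nondeg : ∀ x : Fin 6 → ℝ, x ≠ 0 → ∃ y : Fin 6 → ℝ, w1 x y ≠ 0 := by
  intro x hx
  refine ⟨fun k => if k = 0 then -(x 5) else if k = 1 then x 3 else if k = 2 then -(x 4)
    else if k = 3 then -(x 1) else if k = 4 then x 2 else x 0, fun h => hx ?_⟩
  simp [w1] at h
  have h0 : x 0 = 0 := by nlinarith [sq_nonneg (x 0), sq_nonneg (x 1), sq_nonneg (x 2), sq_nonneg (x 3), sq_nonneg (x 4), sq_nonneg (x 5)]
  have h1 : x 1 = 0 := by nlinarith [sq_nonneg (x 0), sq_nonneg (x 1), sq_nonneg (x 2), sq_nonneg (x 3), sq_nonneg (x 4), sq_nonneg (x 5)]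
  have h2 : x 2 = 0 := by nlinarith [sq_nonneg (x 0), sq_nonneg (x 1), sq_nonneg (x 2), sq_nonneg (x 3), sq_nonneg (x 4), sq_nonneg (x 5)]
  have h3 : x 3 = 0 := by nlinarith [sq_nonneg (x 0), sq_nonneg (x 1), sq_nonneg (x 2), sq_nonneg (x 3), sq_nonneg (x 4), sq_nonneg (x 5)]
  have h4 : x 4 = 0 := by nlinarith [sq_nonneg (x 0), sq_nonneg (x 1), sq_nonneg (x 2), sq_nonneg (x 3), sq_nonneg (x 4), sq_nonneg (x 5)]
  have h5 : x 5 = 0 := by nlinarith [sq_nonneg (x 0), sq_nonneg (x 1), sq_nonneg (x 2), sq_nonneg (x 3), sq_nonneg (x 4), sq_nonneg (x 5)]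
  funext i
  fin_cases i <;> simp only [Pi.zero_apply] <;>
    first | exact h0 | exact h1 | exact h2 | exact h3 | exact h4 | exact h5

lemma w2_nondeg : ∀ x : Fin 6 → ℝ, x ≠ 0 → ∃ y : Fin 6 → ℝ, w2 x y ≠ 0 := by
  intro x hx
  refine ⟨fun k => if k = 0 then -(x 5) else if k = 1 then -(x 4) else if k = 2 then -(x 3)
    else if k = 3 then x 2 else if k = 4 then x 1 else x 0, fun h => hx ?_⟩
  simp [w2] at h
  have h0 : x 0 = 0 := by nlinarith [sq_nonneg (x 0), sq_nonneg (x 1), sq_nonneg (x 2), sq_nonneg (x 3), sq_nonneg (x 4), sq_nonneg (x 5)]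
  have h1 : x 1 = 0 := by nlinarith [sq_nonneg (x 0), sq_nonneg (x 1), sq_nonneg (x 2), sq_nonneg (x 3), sq_nonneg (x 4), sq_nonneg (x 5)]
  have h2 : x 2 = 0 := by nlinarith [sq_nonneg (x 0), sq_nonneg (x 1), sq_nonneg (x 2), sq_nonneg (x 3), sq_nonneg (x 4), sq_nonneg (x 5)]
  have h3 : x 3 = 0 := by nlinarith [sq_nonneg (x 0), sq_nonneg (x 1), sq_nonneg (x 2), sq_nonneg (x 3), sq_nonneg (x 4), sq_nonneg (x 5)]
  have h4 : x 4 = 0 := by nlinarith [sq_nonneg (x 0), sq_nonneg (x 1), sq_nonneg (x 2), sq_nonneg (x 3), sq_nonneg (x 4), sq_nonneg (x 5)]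
  have h5 : x 5 = 0 := by nlinarith [sq_nonneg (x 0), sq_nonneg (x 1), sq_nonneg (x 2), sq_nonneg (x 3), sq_nonneg (x 4), sq_nonneg (x 5)]
  funext i
  fin_cases i <;> simp only [Pi.zero_apply] <;>
    first | exact h0 | exact h1 | exact h2 | exact h3 | exact h4 | exact h5

lemma w2_05 : w2 (e6 0) (e6 5) = 1 := by simp [w2, e6_apply]
lemma w2_25 : w2 (e6 2) (e6 5) = 0 := by simp [w2, e6_apply]
lemma w2_24 : w2 (e6 2) (e6 4) = 0 := by simp [w2, e6_apply]
lemma w2_23 : w2 (e6 2) (e6 3) = 1 := by simp [w2, e6_apply]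

lemma main_no_aut :
    ¬ ∃ A : (Fin 6 → ℝ) ≃ₗ[ℝ] (Fin 6 → ℝ),
        (∀ x y : Fin 6 → ℝ, A (LB x y) = LB (A x) (A y)) ∧
        ∃ f : (Fin 6 → ℝ) →ₗ[ℝ] ℝ,
          ∀ x y : Fin 6 → ℝ, w1 (A x) (A y) - w2 x y = f (LB x y) := by
  rintro ⟨A, hAut, f, hf⟩
  -- images of basis vectors under the bracket relations
  have h3 : A (e6 3) = Bf (A (e6 0)) (A (e6 1)) := by
    rw [← LB_e01, hAut, LB_apply]
  have h4 : A (e6 4) = Bf (A (e6 0)) (A (e6 2)) := by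
    rw [← LB_e02, hAut, LB_apply]
  have h5 : A (e6 5) = Bf (A (e6 0)) (A (e6 3)) := by
    rw [← LB_e03, hAut, LB_apply]
  -- coordinates of A e₃
  have t30 : A (e6 3) 0 = 0 := by rw [h3, Bf0]
  have t31 : A (e6 3) 1 = 0 := by rw [h3, Bf1]
  have t32 : A (e6 3) 2 = 0 := by rw [h3, Bf2]
  -- coordinates of A e₄
  have q40 : A (e6 4) 0 = 0 := by rw [h4, Bf0]
  have q41 : A (e6 4) 1 = 0 := by rw [h4, Bf1]
  have q42 : A (e6 4) 2 = 0 := by rw [h4, Bf2]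
  have q43 : A (e6 4) 3 = A (e6 0) 0 * A (e6 2) 1 - A (e6 0) 1 * A (e6 2) 0 := by
    rw [h4, Bf3]
  have q44 : A (e6 4) 4 = A (e6 0) 0 * A (e6 2) 2 - A (e6 0) 2 * A (e6 2) 0 := by
    rw [h4, Bf4]
  -- coordinates of A e₅
  have f50 : A (e6 5) 0 = 0 := by rw [h5, Bf0]
  have f51 : A (e6 5) 1 = 0 := by rw [h5, Bf1]
  have f52 : A (e6 5) 2 = 0 := by rw [h5, Bf2]
  have f53 : A (e6 5) 3 = 0 := by rw [h5, Bf3, t31, t30]; ring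
  have f54 : A (e6 5) 4 = 0 := by rw [h5, Bf4, t32, t30]; ring
  have f55 : A (e6 5) 5 = A (e6 0) 0 * A (e6 3) 3 := by
    rw [h5, Bf5, t30]; ring
  -- bracket-zero relations
  have z05 : LB (e6 0) (e6 5) = 0 := LB_struct_zero 0 5 (by decide)
  have z25 : LB (e6 2) (e6 5) = 0 := LB_struct_zero 2 5 (by decide)
  have z04 : LB (e6 0) (e6 4) = 0 := LB_struct_zero 0 4 (by decide)
  have z24 : LB (e6 2) (e6 4) = 0 := LB_struct_zero 2 4 (by decide)
  have z23 : LB (e6 2) (e6 3) = 0 := LB_struct_zero 2 3 (by decide)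
  -- key equation 1 : a² t = 1
  have E1 := hf (e6 0) (e6 5)
  rw [z05, map_zero, w2_05] at E1
  simp only [w1] at E1
  rw [f55, f50, f53, f51, f54, f52] at E1
  have key1 : A (e6 0) 0 * (A (e6 0) 0 * A (e6 3) 3) = 1 := by linear_combination E1
  have ha0 : A (e6 0) 0 ≠ 0 := by
    intro h; rw [h] at key1; norm_num at key1
  have hat : A (e6 0) 0 * A (e6 3) 3 ≠ 0 := by
    intro h; rw [h, mul_zero] at key1; norm_num at key1
  -- key equation 2 : (A e₂)₀ = 0
  have E2 := hf (e6 2) (e6 5)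
  rw [z25, map_zero, w2_25] at E2
  simp only [w1] at E2
  rw [f55, f50, f53, f51, f54, f52] at E2
  have key2 : A (e6 2) 0 * (A (e6 0) 0 * A (e6 3) 3) = 0 := by linear_combination E2
  have c20 : A (e6 2) 0 = 0 := by
    rcases mul_eq_zero.mp key2 with h | h
    · exact h
    · exact absurd h hat
  -- key equation 3 : (A e₄)₃ = 0, hence (A e₂)₁ = 0
  have E3 : LB (A (e6 0)) (A (e6 4)) = 0 := by rw [← hAut, z04, map_zero]
  have E3' : A (e6 0) 0 * A (e6 4) 3 - A (e6 0) 3 * A (e6 4) 0 = 0 := by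
    have h := congrFun E3 5
    rw [LB_apply, Bf5] at h
    simpa using h
  rw [q40] at E3'
  have c43 : A (e6 4) 3 = 0 := by
    have h' : A (e6 0) 0 * A (e6 4) 3 = 0 := by linear_combination E3'
    rcases mul_eq_zero.mp h' with h | h
    · exact absurd h ha0
    · exact h
  have c21 : A (e6 2) 1 = 0 := by
    have h' : A (e6 0) 0 * A (e6 2) 1 = 0 := by
      linear_combination c43 - q43 + A (e6 0) 1 * c20
    rcases mul_eq_zero.mp h' with h | h
    · exact absurd h ha0
    · exact h
  -- key equation 4 : (A e₂)₂ = 0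
  have E4 := hf (e6 2) (e6 4)
  rw [z24, map_zero, w2_24] at E4
  simp only [w1] at E4
  rw [q40, q41, q42, c20, c21, c43, q44, c20] at E4
  have key4 : A (e6 0) 0 * (A (e6 2) 2 * A (e6 2) 2) = 0 := by linear_combination E4
  have c22 : A (e6 2) 2 = 0 := by
    rcases mul_eq_zero.mp key4 with h | h
    · exact absurd h ha0
    · exact mul_self_eq_zero.mp h
  -- key equation 5 : contradiction
  have E5 := hf (e6 2) (e6 3)
  rw [z23, map_zero, w2_23] at E5
  simp only [w1] at E5
  rw [t30, t31, t32, c20, c21, c22] at E5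
  norm_num at E5

/-- On the 6-dimensional nilpotent Lie algebra with brackets `[e₁,e₂] = e₄`, `[e₁,e₃] = e₅`,
`[e₁,e₄] = e₆`, the forms `ω₁ = e¹∧e⁶ − e²∧e⁴ + e³∧e⁵` and `ω₂ = e¹∧e⁶ + e²∧e⁵ + e³∧e⁴` are
symplectic, but no automorphism pulls `ω₁` back to a form cohomologous to `ω₂`: the classes of
`ω₁` and `ω₂` in `H²(𝔫)` lie in different `Aut(𝔫)`-orbits. -/
theorem symplectic_forms_in_different_aut_orbits :
    ∃ B : (Fin 6 → ℝ) →ₗ[ℝ] (Fin 6 → ℝ) →ₗ[ℝ] (Fin 6 → ℝ),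
      -- B is a Lie bracket: alternating and satisfying the Jacobi (Leibniz) identity
      (∀ x : Fin 6 → ℝ, B x x = 0) ∧
      (∀ x y z : Fin 6 → ℝ, B x (B y z) = B (B x y) z + B y (B x z)) ∧
      -- structure constants: [e₁,e₂] = e₄, [e₁,e₃] = e₅, [e₁,e₄] = e₆, all others zero
      (B (e6 0) (e6 1) = e6 3 ∧ B (e6 0) (e6 2) = e6 4 ∧ B (e6 0) (e6 3) = e6 5) ∧
      (∀ i j : Fin 6,
        ¬((i = 0 ∧ j = 1) ∨ (i = 1 ∧ j = 0) ∨ (i = 0 ∧ j = 2) ∨ (i = 2 ∧ j = 0) ∨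
          (i = 0 ∧ j = 3) ∨ (i = 3 ∧ j = 0)) → B (e6 i) (e6 j) = 0) ∧
      -- ω₁ and ω₂ are symplectic structures
      ((∀ x y z : Fin 6 → ℝ, w1 (B x y) z + w1 (B y z) x + w1 (B z x) y = 0) ∧
        (∀ x : Fin 6 → ℝ, x ≠ 0 → ∃ y : Fin 6 → ℝ, w1 x y ≠ 0)) ∧
      ((∀ x y z : Fin 6 → ℝ, w2 (B x y) z + w2 (B y z) x + w2 (B z x) y = 0) ∧
        (∀ x : Fin 6 → ℝ, x ≠ 0 → ∃ y : Fin 6 → ℝ, w2 x y ≠ 0)) ∧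
      -- but the pullback of ω₁ by any automorphism is never cohomologous to ω₂
      ¬ ∃ A : (Fin 6 → ℝ) ≃ₗ[ℝ] (Fin 6 → ℝ),
          (∀ x y : Fin 6 → ℝ, A (B x y) = B (A x) (A y)) ∧
          ∃ f : (Fin 6 → ℝ) →ₗ[ℝ] ℝ,
            ∀ x y : Fin 6 → ℝ, w1 (A x) (A y) - w2 x y = f (B x y) := by
  exact ⟨LB, LB_alt, LB_jacobi, ⟨LB_e01, LB_e02, LB_e03⟩, LB_struct_zero,
    ⟨w1_closed, w1_nondeg⟩, ⟨w2_closed, w2_nondeg⟩, main_no_aut⟩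
end
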